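/- arXiv:2402.03276 — 4 statements merged into one kernel-verified Lean document; each statement's English description precedes it below -/
import Mathlib

section
/- For every m ∈ ℤ⁺ and k ∈ ℕ: T^k(m) = (m/2^k + Σ_{i=0}^{k−1} p(m)_i / (3^(Σ_{j=0}^{i} p(m)_j) · 2^(k−i))) · 3^(Σ_{i=0}^{k−1} p(m)_i), as an identity of rational (or real) numbers. -/
/-- The accelerated Collatz map `T(m) = m/2` if `m` even, `(3m+1)/2` if `m` odd. -/
def T (m : ℕ) : ℕ := if m % 2 = 0 then m / 2 else (3 * m + 1) / 2

/-- The parity sequence of `m`: `p(m)_k = T^[k] m mod 2`. -/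
def parity (m k : ℕ) : ℕ := T^[k] m % 2

lemma T_cast (n : ℕ) : (T n : ℝ) = (3 ^ (n % 2) * n + ((n % 2 : ℕ) : ℝ)) / 2 := by
  unfold T
  rcases Nat.even_or_odd n with h | h
  · have h2 : n % 2 = 0 := Nat.even_iff.mp h
    rw [if_pos h2, h2, Nat.cast_div h.two_dvd (by norm_num)]
    push_cast
    ring
  · have h2 : n % 2 = 1 := Nat.odd_iff.mp h
    have hd : 2 ∣ 3 * n + 1 := by omega
    rw [if_neg (by omega), h2, Nat.cast_div hd (by norm_num)]
    push_cast
    ring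

theorem collatz_iterate_formula (m : ℕ) (hm : 0 < m) (k : ℕ) :
    (T^[k] m : ℝ) =
      ((m : ℝ) / 2 ^ k +
        ∑ i ∈ Finset.range k,
          (parity m i : ℝ) / (3 ^ (∑ j ∈ Finset.range (i + 1), parity m j) * 2 ^ (k - i))) *
      3 ^ (∑ i ∈ Finset.range k, parity m i) := by
  induction k with
  | zero => simp
  | succ k ih =>
    rw [Function.iterate_succ_apply', T_cast]
    have hp : T^[k] m % 2 = parity m k := rfl
    rw [hp, ih]
    rw [Finset.sum_range_succ (f := fun i => (parity m i : ℝ) /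
        (3 ^ (∑ j ∈ Finset.range (i + 1), parity m j) * 2 ^ (k + 1 - i))),
      Finset.sum_range_succ (f := fun i => parity m i)]
    have hA : (∑ i ∈ Finset.range k, (parity m i : ℝ) /
        (3 ^ (∑ j ∈ Finset.range (i + 1), parity m j) * 2 ^ (k + 1 - i)))
        = (∑ i ∈ Finset.range k, (parity m i : ℝ) /
        (3 ^ (∑ j ∈ Finset.range (i + 1), parity m j) * 2 ^ (k - i))) / 2 := by
      rw [Finset.sum_div]
      refine Finset.sum_congr rfl fun i hi => ?_
      have hik : i < k := Finset.mem_range.mp hi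
      have : k + 1 - i = (k - i) + 1 := by omega
      rw [this, pow_succ]
      ring
    rw [hA]
    have h1 : k + 1 - k = 1 := by omega
    rw [h1, pow_one]
    set S : ℕ := ∑ i ∈ Finset.range k, parity m i
    set p : ℕ := parity m k
    set A : ℝ := ∑ i ∈ Finset.range k, (parity m i : ℝ) /
        (3 ^ (∑ j ∈ Finset.range (i + 1), parity m j) * 2 ^ (k - i))
    have h3S : (3 : ℝ) ^ S ≠ 0 := by positivity
    have h3p : (3 : ℝ) ^ p ≠ 0 := by positivity
    have h2k : (2 : ℝ) ^ k ≠ 0 := by positivity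
    rw [pow_succ, pow_add]
    field_simp
    ring
end

section
/- Let a, b ∈ ℤ⁺ with a < b, let ε > 0, and let N ∈ ℕ satisfy 0 ≤ N ≤ ⌈log₂(b−a)⌉. Then #{m ∈ [a,b) ∩ ℤ : |Σ_{k=0}^{N−1} p(m)_k − N/2| ≥ ε·N} / (b − a) ≤ 4·e^(−2ε²N). -/
set_option maxHeartbeats 1000000

open Finset Real


lemma key_div (N x y : ℕ) (hxy : x % 2^(N+1) = y % 2^(N+1)) :
    x / 2 % 2^N = y / 2 % 2^N := by
  rw [← Nat.mod_mul_right_div_self x 2 (2^N), ← Nat.mod_mul_right_div_self y 2 (2^N),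
    show 2 * 2^N = 2^(N+1) by ring, hxy]

lemma mod_recon (N x : ℕ) : x % 2^(N+1) = 2 * (x / 2 % 2^N) + x % 2 := by
  conv_lhs => rw [show x = 2 * (x/2) + x % 2 from (Nat.div_add_mod x 2).symm ▸ rfl]
  rw [show (2:ℕ)^(N+1) = 2 * 2^N by ring]
  have hme : 2 * (x/2) + x % 2 ≡ 2 * (x/2 % 2^N) + x % 2 [MOD 2*2^N] :=
    Nat.ModEq.add_right _ (((Nat.mod_modEq (x/2) (2^N)).symm.mul_left' 2))
  have hlt : 2 * (x/2 % 2^N) + x % 2 < 2*2^N := by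
    have := Nat.mod_lt (x/2) (show 0 < 2^N from Nat.pow_pos (by norm_num))
    have := Nat.mod_lt x (show 0 < 2 by norm_num)
    omega
  rw [hme, Nat.mod_eq_of_lt hlt]

lemma mod_succ_iff (N m m' : ℕ) :
    m % 2^(N+1) = m' % 2^(N+1) ↔ (m % 2 = m' % 2 ∧ T m % 2^N = T m' % 2^N) := by
  constructor
  · intro h
    have h2 : m % 2 = m' % 2 := by
      have : m % 2^(N+1) % 2 = m' % 2^(N+1) % 2 := by rw [h]
      simpa [Nat.mod_mod_of_dvd, dvd_pow_self 2 (Nat.succ_ne_zero N)] using this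
    refine ⟨h2, ?_⟩
    unfold T
    rcases Nat.eq_zero_or_pos (m % 2) with he | ho
    · rw [if_pos he, if_pos (h2 ▸ he)]
      exact key_div N m m' h
    · have ho : m % 2 ≠ 0 := Nat.pos_iff_ne_zero.mp ho
      rw [if_neg ho, if_neg (h2 ▸ ho)]
      exact key_div N _ _ (Nat.ModEq.add_right 1 (Nat.ModEq.mul_left 3 h))
  · rintro ⟨h2, hT⟩
    unfold T at hT
    rcases Nat.eq_zero_or_pos (m % 2) with he | ho
    · rw [if_pos he, if_pos (h2 ▸ he)] at hT
      rw [mod_recon N m, mod_recon N m', h2, hT]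
    · have ho : m % 2 ≠ 0 := Nat.pos_iff_ne_zero.mp ho
      rw [if_neg ho, if_neg (h2 ▸ ho)] at hT
      have e1 : (3*m+1) % 2 = 0 := by omega
      have e2 : (3*m'+1) % 2 = 0 := by omega
      have h31 : (3*m+1) % 2^(N+1) = (3*m'+1) % 2^(N+1) := by
        rw [mod_recon N (3*m+1), mod_recon N (3*m'+1), hT, e1, e2]
      have h3 : 3*m ≡ 3*m' [MOD 2^(N+1)] := Nat.ModEq.add_right_cancel' 1 h31
      have hco : Nat.Coprime 3 (2^(N+1)) :=
        Nat.Coprime.pow_right _ (by decide)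
      exact (h3.cancel_left_of_coprime hco.symm)

lemma parity_zero (m : ℕ) : parity m 0 = m % 2 := by simp [parity]

lemma parity_succ (m k : ℕ) : parity m (k+1) = parity (T m) k := by
  simp [parity, Function.iterate_succ_apply]

lemma parity_eq_iff (N : ℕ) : ∀ m m' : ℕ,
    (∀ k < N, parity m k = parity m' k) ↔ m % 2^N = m' % 2^N := by
  induction N with
  | zero => intro m m'; simp [Nat.mod_one]
  | succ n ih =>
    intro m m'
    rw [mod_succ_iff, ← ih (T m) (T m')]
    constructor
    · intro h
      refine ⟨by simpa [parity_zero] using h 0 (Nat.succ_pos n), fun k hk => ?_⟩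
      simpa [parity_succ] using h (k+1) (by omega)
    · rintro ⟨h0, h1⟩ k hk
      cases k with
      | zero => simpa [parity_zero] using h0
      | succ k => simpa [parity_succ] using h1 k (by omega)

lemma parity_mod (N m : ℕ) (k : ℕ) (hk : k < N) :
    parity m k = parity (m % 2^N) k := by
  exact (parity_eq_iff N m (m % 2^N)).mpr (Nat.mod_mod_of_dvd m dvd_rfl).symm k hk


open Finset Real

lemma sum_prod_bool (N : ℕ) (g : Bool → ℝ) :
    ∑ f : Fin N → Bool, ∏ k, g (f k) = (g true + g false) ^ N := by
  rw [← Fintype.piFinset_univ, ← Finset.prod_univ_sum]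
  simp

lemma one_side (N : ℕ) (ε : ℝ) (hε : 0 < ε) (σ : ℝ) (hσ : σ = 1 ∨ σ = -1) :
    ((Finset.univ.filter (fun f : Fin N → Bool =>
        ε * N ≤ σ * ((∑ k, (if f k then (1:ℝ) else 0)) - N/2))).card : ℝ)
      ≤ 2^N * Real.exp (-2*ε^2*N) := by
  set t : ℝ := 4 * ε * σ with ht
  set S : (Fin N → Bool) → ℝ := fun f => ∑ k, (if f k then (1:ℝ) else 0) with hS
  set C := ((Finset.univ.filter (fun f : Fin N → Bool =>
        ε * N ≤ σ * (S f - N/2))).card : ℝ) with hC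
  have hσ2 : σ * σ = 1 := by rcases hσ with h | h <;> (rw [h]; norm_num)
  have key : ∀ f : Fin N → Bool,
      Real.exp (t * (S f - N/2))
        = ∏ k, (fun b => Real.exp (t * (if b then (1:ℝ) else 0) - t/2)) (f k) := by
    intro f
    rw [← Real.exp_sum]
    congr 1
    have : ∑ k, (t * (if f k then (1:ℝ) else 0) - t/2)
        = t * S f - N * (t/2) := by
      rw [Finset.sum_sub_distrib, ← Finset.mul_sum, Finset.sum_const,
        Finset.card_univ, Fintype.card_fin, nsmul_eq_mul, hS]
    rw [this]; ring
  have total : ∑ f : Fin N → Bool, Real.exp (t * (S f - N/2))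
        = (Real.exp (t/2) + Real.exp (-(t/2))) ^ N := by
    calc ∑ f : Fin N → Bool, Real.exp (t * (S f - N/2))
        = ∑ f : Fin N → Bool,
            ∏ k, (fun b => Real.exp (t * (if b then (1:ℝ) else 0) - t/2)) (f k) := by
          exact Finset.sum_congr rfl fun f _ => key f
      _ = ((fun b => Real.exp (t * (if b then (1:ℝ) else 0) - t/2)) true
            + (fun b => Real.exp (t * (if b then (1:ℝ) else 0) - t/2)) false) ^ N :=
          sum_prod_bool N (fun b => Real.exp (t * (if b then (1:ℝ) else 0) - t/2))
      _ = _ := by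
          have e1 : t * (1:ℝ) - t/2 = t/2 := by ring
          have e2 : t * (0:ℝ) - t/2 = -(t/2) := by ring
          simp [show t - t/2 = t/2 from by ring]
  have bound1 : (Real.exp (t/2) + Real.exp (-(t/2))) ≤ 2 * Real.exp (2*ε^2) := by
    have h := Real.cosh_le_exp_half_sq (t/2)
    rw [Real.cosh_eq] at h
    have h2 : (t/2)^2/2 = 2*ε^2 := by
      rw [ht]; rcases hσ with hh | hh <;> (rw [hh]; ring)
    rw [h2] at h; linarith
  have hcard : C * Real.exp (4*ε^2*N) ≤ ∑ f : Fin N → Bool, Real.exp (t * (S f - N/2)) := by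
    calc C * Real.exp (4*ε^2*N)
        = ∑ _f ∈ Finset.univ.filter (fun f : Fin N → Bool => ε * N ≤ σ * (S f - N/2)),
            Real.exp (4*ε^2*N) := by rw [Finset.sum_const, nsmul_eq_mul, hC]
      _ ≤ ∑ f ∈ Finset.univ.filter (fun f : Fin N → Bool => ε * N ≤ σ * (S f - N/2)),
            Real.exp (t * (S f - N/2)) := by
          refine Finset.sum_le_sum fun f hf => Real.exp_le_exp.mpr ?_
          have hf' := (Finset.mem_filter.mp hf).2
          calc 4*ε^2*(N:ℝ) = 4*ε*(ε*N) := by ring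
            _ ≤ 4*ε*(σ*(S f - N/2)) := by
                exact mul_le_mul_of_nonneg_left hf' (by positivity)
            _ = t * (S f - N/2) := by rw [ht]; ring
      _ ≤ _ := Finset.sum_le_sum_of_subset_of_nonneg (Finset.filter_subset _ _)
            (fun _ _ _ => (Real.exp_pos _).le)
  have hpow : (Real.exp (t/2) + Real.exp (-(t/2)))^N ≤ 2^N * Real.exp ((N:ℝ)*(2*ε^2)) := by
    rw [Real.exp_nat_mul, ← mul_pow]
    exact pow_le_pow_left₀ (by positivity) bound1 N
  have hfin : C * Real.exp (4*ε^2*N) ≤ 2^N * Real.exp ((N:ℝ)*(2*ε^2)) :=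
    le_trans hcard (total ▸ hpow)
  have he : (0:ℝ) < Real.exp (4*ε^2*N) := Real.exp_pos _
  calc C = (C * Real.exp (4*ε^2*N)) * Real.exp (-(4*ε^2*N)) := by
        rw [mul_assoc, ← Real.exp_add]; simp
    _ ≤ (2^N * Real.exp ((N:ℝ)*(2*ε^2))) * Real.exp (-(4*ε^2*N)) :=
        mul_le_mul_of_nonneg_right hfin (Real.exp_pos _).le
    _ = 2^N * Real.exp (-2*ε^2*N) := by
        rw [mul_assoc, ← Real.exp_add]
        congr 2
        ring

lemma two_side (N : ℕ) (ε : ℝ) (hε : 0 < ε) :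
    ((Finset.univ.filter (fun f : Fin N → Bool =>
        ε * N ≤ |(∑ k, (if f k then (1:ℝ) else 0)) - N/2|)).card : ℝ)
      ≤ 2 * (2^N * Real.exp (-2*ε^2*N)) := by
  have hsub : (Finset.univ.filter (fun f : Fin N → Bool =>
        ε * N ≤ |(∑ k, (if f k then (1:ℝ) else 0)) - N/2|))
      ⊆ (Finset.univ.filter (fun f : Fin N → Bool =>
          ε * N ≤ 1 * ((∑ k, (if f k then (1:ℝ) else 0)) - N/2)))
        ∪ (Finset.univ.filter (fun f : Fin N → Bool =>
          ε * N ≤ (-1) * ((∑ k, (if f k then (1:ℝ) else 0)) - N/2))) := by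
    intro f hf
    rw [Finset.mem_filter] at hf
    rw [Finset.mem_union, Finset.mem_filter, Finset.mem_filter]
    rcases le_or_gt ((∑ k, (if f k then (1:ℝ) else 0)) - N/2) 0 with h | h
    · right; refine ⟨Finset.mem_univ f, ?_⟩
      have := hf.2
      rw [abs_of_nonpos h] at this; linarith
    · left; refine ⟨Finset.mem_univ f, ?_⟩
      have := hf.2
      rw [abs_of_pos h] at this; linarith
  calc ((Finset.univ.filter (fun f : Fin N → Bool =>
        ε * N ≤ |(∑ k, (if f k then (1:ℝ) else 0)) - N/2|)).card : ℝ)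
      ≤ (((Finset.univ.filter (fun f : Fin N → Bool =>
          ε * N ≤ 1 * ((∑ k, (if f k then (1:ℝ) else 0)) - N/2)))
        ∪ (Finset.univ.filter (fun f : Fin N → Bool =>
          ε * N ≤ (-1) * ((∑ k, (if f k then (1:ℝ) else 0)) - N/2)))).card : ℝ) := by
        exact_mod_cast Nat.cast_le.mpr (Finset.card_le_card hsub)
    _ ≤ (((Finset.univ.filter (fun f : Fin N → Bool =>
          ε * N ≤ 1 * ((∑ k, (if f k then (1:ℝ) else 0)) - N/2))).card : ℝ)
        + ((Finset.univ.filter (fun f : Fin N → Bool =>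
          ε * N ≤ (-1) * ((∑ k, (if f k then (1:ℝ) else 0)) - N/2))).card : ℝ)) := by
        exact_mod_cast Nat.cast_le.mpr (Finset.card_union_le _ _)
    _ ≤ 2^N * Real.exp (-2*ε^2*N) + 2^N * Real.exp (-2*ε^2*N) := by
        exact add_le_add (one_side N ε hε 1 (Or.inl rfl)) (one_side N ε hε (-1) (Or.inr rfl))
    _ = 2 * (2^N * Real.exp (-2*ε^2*N)) := by ring


lemma fiber_card (a b n r : ℕ) (hn : 0 < n) (hab : a < b) :
    ((Finset.Ico a b).filter (fun m => m % n = r)).card ≤ (b - a + n - 1) / n := by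
  set K := (b - a + n - 1) / n with hK
  have h : ((Finset.Ico a b).filter (fun m => m % n = r)).card ≤ (Finset.range K).card := by
    apply Finset.card_le_card_of_injOn (fun m => (m - a) / n)
    · intro m hm
      rw [Finset.mem_coe, Finset.mem_filter, Finset.mem_Ico] at hm
      rw [Finset.mem_coe, Finset.mem_range, hK]
      have h1 : m - a ≤ b - a - 1 := by omega
      calc (m - a)/n ≤ (b - a - 1)/n := Nat.div_le_div_right h1
        _ < (b - a - 1)/n + 1 := Nat.lt_succ_self _
        _ = (b - a - 1 + n)/n := (Nat.add_div_right _ hn).symm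
        _ ≤ (b - a + n - 1)/n := Nat.div_le_div_right (by omega)
    · intro m1 hm1 m2 hm2 heq
      simp only [Finset.coe_filter, Set.mem_setOf_eq, Finset.mem_Ico] at hm1 hm2
      have hmod : m1 % n = m2 % n := hm1.2.trans hm2.2.symm
      simp only at heq
      suffices h : ∀ x y : ℕ, a ≤ x → a ≤ y → x ≤ y → x % n = y % n →
          (x-a)/n = (y-a)/n → x = y by
        rcases le_total m1 m2 with hle | hle
        · exact h m1 m2 hm1.1.1 hm2.1.1 hle hmod heq
        · exact (h m2 m1 hm2.1.1 hm1.1.1 hle hmod.symm heq.symm).symm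
      intro x y hax hay hxy hmod' heq'
      have hdvd : n ∣ y - x := (Nat.modEq_iff_dvd' hxy).mp hmod'
      set X := n * ((x - a)/n) with hX
      have hq1 : X ≤ x - a := Nat.mul_div_le _ _
      have hq2 : X ≤ y - a := by rw [hX, heq']; exact Nat.mul_div_le _ _
      have hl1 : x - a < X + n := by
        rw [hX]
        calc x - a = n*((x-a)/n) + (x-a)%n := (Nat.div_add_mod _ _).symm
          _ < n*((x-a)/n) + n := Nat.add_lt_add_left (Nat.mod_lt _ hn) _
      have hl2 : y - a < X + n := by
        rw [hX, heq']
        calc y - a = n*((y-a)/n) + (y-a)%n := (Nat.div_add_mod _ _).symm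
          _ < n*((y-a)/n) + n := Nat.add_lt_add_left (Nat.mod_lt _ hn) _
      clear_value X
      have hlt : y - x < n := by omega
      have := Nat.eq_zero_of_dvd_of_lt hdvd hlt
      omega
  rw [Finset.card_range] at h
  exact h

lemma K_mul_le (x n : ℕ) (hx : 0 < x) (h2 : 2^n ≤ 2 * x) :
    ((x + 2^n - 1) / 2^n) * 2^n ≤ 2 * x := by
  have hp : 0 < 2^n := Nat.pow_pos (by norm_num)
  rcases le_or_gt (2^n) x with h | h
  · calc ((x + 2^n - 1) / 2^n) * 2^n ≤ x + 2^n - 1 := Nat.div_mul_le_self _ _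
      _ ≤ 2 * x := by omega
  · have hK : (x + 2^n - 1) / 2^n ≤ 1 := by
      apply Nat.lt_succ_iff.mp
      apply Nat.div_lt_of_lt_mul
      omega
    calc ((x + 2^n - 1) / 2^n) * 2^n ≤ 1 * 2^n := Nat.mul_le_mul_right _ hK
      _ = 2^n := one_mul _
      _ ≤ 2 * x := h2


open scoped Classical in
theorem parity_sum_concentration
    (a b : ℕ) (ha : 0 < a) (hab : a < b) (ε : ℝ) (hε : 0 < ε)
    (N : ℕ) (hN : (N : ℤ) ≤ ⌈Real.logb 2 ((b : ℝ) - a)⌉) :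
    (((Finset.Ico a b).filter
        (fun m => ε * N ≤ |(∑ k ∈ Finset.range N, (parity m k : ℝ)) - N / 2|)).card : ℝ) /
      ((b : ℝ) - a) ≤ 4 * Real.exp (-2 * ε ^ 2 * N) := by
  have hxR : (0:ℝ) < (b:ℝ) - a := by
    have : (a:ℝ) < (b:ℝ) := by exact_mod_cast hab
    linarith
  have hbR1 : (1:ℝ) ≤ (b:ℝ) - a := by
    have : (a:ℝ) + 1 ≤ (b:ℝ) := by exact_mod_cast hab
    linarith
  -- 2^N ≤ 2 * (b - a) in ℕ
  have hpow : 2^N ≤ 2 * (b - a) := by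
    have h1 : ((N:ℝ)) < Real.logb 2 ((b:ℝ) - a) + 1 := by
      have hc := Int.ceil_lt_add_one (Real.logb 2 ((b:ℝ)-a))
      have hN' : ((N:ℤ):ℝ) ≤ ((⌈Real.logb 2 ((b:ℝ) - a)⌉ : ℤ) : ℝ) := by exact_mod_cast hN
      push_cast at hN' ⊢
      linarith
    have h2 : ((2:ℝ))^N < 2 * ((b:ℝ) - a) := by
      calc ((2:ℝ))^N = (2:ℝ) ^ ((N:ℝ)) := by rw [Real.rpow_natCast]
        _ < (2:ℝ) ^ (Real.logb 2 ((b:ℝ)-a) + 1) :=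
            (Real.rpow_lt_rpow_left_iff (by norm_num)).mpr h1
        _ = 2 * ((b:ℝ)-a) := by
            rw [Real.rpow_add (by norm_num), Real.rpow_one,
              Real.rpow_logb (by linarith) (by norm_num) (by linarith)]
            ring
    have h3 : ((2^N : ℕ):ℝ) < ((2*(b-a) : ℕ):ℝ) := by
      push_cast [Nat.cast_sub hab.le]
      linarith
    exact_mod_cast h3.le
  set n := 2^N with hn
  have hnpos : 0 < n := Nat.pow_pos (by norm_num)
  set K := (b - a + n - 1)/n with hKdef
  set E := Real.exp (-2 * ε ^ 2 * N) with hE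
  have hEpos : 0 < E := Real.exp_pos _
  -- ℕ-level count bound
  set F := (Finset.Ico a b).filter
      (fun m => ε * N ≤ |(∑ k ∈ Finset.range N, (parity m k : ℝ)) - N / 2|) with hF
  set RR := (Finset.range n).filter
      (fun r => ε * N ≤ |(∑ k ∈ Finset.range N, (parity r k : ℝ)) - N / 2|) with hRR
  have hfib : F.card = ∑ r ∈ RR, (F.filter (fun m => m % n = r)).card := by
    apply Finset.card_eq_sum_card_fiberwise
    intro m hm
    rw [hF, Finset.mem_coe, Finset.mem_filter] at hm
    rw [hRR, Finset.mem_coe, Finset.mem_filter, Finset.mem_range]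
    refine ⟨Nat.mod_lt _ hnpos, ?_⟩
    have hps : ∀ k ∈ Finset.range N, (parity m k : ℝ) = (parity (m % n) k : ℝ) := by
      intro k hk
      rw [Finset.mem_range] at hk
      rw [parity_mod N m k hk, hn]
    rw [← Finset.sum_congr rfl hps]
    exact hm.2
  have hcount : F.card ≤ RR.card * K := by
    rw [hfib]
    calc ∑ r ∈ RR, (F.filter (fun m => m % n = r)).card
        ≤ ∑ _r ∈ RR, K := by
          refine Finset.sum_le_sum fun r _ => ?_
          calc (F.filter (fun m => m % n = r)).card
              ≤ (((Finset.Ico a b)).filter (fun m => m % n = r)).card := by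
                apply Finset.card_le_card
                refine Finset.filter_subset_filter _ ?_
                rw [hF]; exact Finset.filter_subset _ _
            _ ≤ K := fiber_card a b n r hnpos hab
      _ = RR.card * K := by rw [Finset.sum_const, smul_eq_mul]
  -- RR.card ≤ Hoeffding bound via injection into bool vectors
  have hRB : (RR.card : ℝ) ≤ 2 * (2^N * E) := by
    have hinj : RR.card ≤ (Finset.univ.filter (fun f : Fin N → Bool =>
        ε * N ≤ |(∑ k, (if f k then (1:ℝ) else 0)) - N/2|)).card := by
      apply Finset.card_le_card_of_injOn
        (fun r => (fun k : Fin N => decide (parity r (k:ℕ) = 1)))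
      · intro r hr
        rw [hRR, Finset.mem_coe, Finset.mem_filter] at hr
        rw [Finset.mem_coe, Finset.mem_filter]
        refine ⟨Finset.mem_univ _, ?_⟩
        have : ∀ k : Fin N, (if decide (parity r (k:ℕ) = 1) then (1:ℝ) else 0)
            = (parity r (k:ℕ) : ℝ) := by
          intro k
          have h2 : parity r (k:ℕ) < 2 := Nat.mod_lt _ (by norm_num)
          interval_cases h : parity r (k:ℕ) <;> simp
        rw [Finset.sum_congr rfl (fun k _ => this k), ← Finset.sum_range fun k =>
          ((parity r k : ℝ))]
        exact hr.2
      · intro r1 hr1 r2 hr2 heq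
        simp only [hRR, Finset.coe_filter, Set.mem_setOf_eq, Finset.mem_range] at hr1 hr2
        have hpar : ∀ k < N, parity r1 k = parity r2 k := by
          intro k hk
          have := congrFun heq ⟨k, hk⟩
          simp only [decide_eq_decide] at this
          have h1 : parity r1 k < 2 := Nat.mod_lt _ (by norm_num)
          have h2 : parity r2 k < 2 := Nat.mod_lt _ (by norm_num)
          omega
        have := (parity_eq_iff N r1 r2).mp hpar
        rwa [Nat.mod_eq_of_lt hr1.1, Nat.mod_eq_of_lt hr2.1] at this
    calc (RR.card : ℝ) ≤ _ := Nat.cast_le.mpr hinj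
      _ ≤ 2 * (2^N * E) := two_side N ε hε
  -- K bound in ℝ
  have hKreal : (K:ℝ) * 2^N ≤ 2 * ((b:ℝ) - a) := by
    have := K_mul_le (b-a) N (by omega) hpow
    rw [← hn] at this
    have h3 : ((K * n : ℕ):ℝ) ≤ ((2*(b-a) : ℕ):ℝ) := Nat.cast_le.mpr this
    push_cast [Nat.cast_sub hab.le] at h3
    rw [hn] at h3
    push_cast at h3
    linarith
  -- combine
  rw [div_le_iff₀ hxR]
  have h2pos : (0:ℝ) < 2^N := by positivity
  calc (F.card : ℝ) ≤ (RR.card : ℝ) * K := by exact_mod_cast hcount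
    _ ≤ (2 * (2^N * E)) * K :=
        mul_le_mul_of_nonneg_right hRB (by positivity)
    _ = (2 * E) * ((K:ℝ) * 2^N) := by ring
    _ ≤ (2 * E) * (2 * ((b:ℝ) - a)) :=
        mul_le_mul_of_nonneg_left hKreal (by positivity)
    _ = 4 * E * ((b:ℝ) - a) := by ring
end

section
/- Let S ⊆ ℤ⁺ and a > 1. (Forward direction) If there exist C > 0 and 0 < D < 1 such that #(S ∩ [a^n, a^(n+1)) ∩ ℤ)/(a^(n+1) − a^n) ≥ 1 − C/a^(Dn) for all n ∈ ℕ, then S has D-density. (Converse) If S has D-density for some 0 < D < 1, then there exists C′ > 0 such that #(S ∩ [a^n, a^(n+1)) ∩ ℤ)/(a^(n+1) − a^n) ≥ 1 − C′/a^(Dn) for all n ∈ ℕ. -/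
open scoped Classical in
/-- Number of elements of `A` in `{1, …, n}`. -/
noncomputable def countIn (A : Set ℕ) (n : ℕ) : ℕ :=
  ((Finset.Icc 1 n).filter (fun m => m ∈ A)).card

/-- `S` has `(C,D)`-density: `#(S ∩ [1,N])/N ≥ 1 - C/N^D` for every positive `N`. -/
def hasCDdensity (S : Set ℕ) (C D : ℝ) : Prop :=
  ∀ N : ℕ, 0 < N → 1 - C / (N : ℝ) ^ D ≤ (countIn S N : ℝ) / N

/-- `S` has `D`-density: it has `(C,D)`-density for some `C > 0`. -/
def hasDdensity (S : Set ℕ) (D : ℝ) : Prop := ∃ C > 0, hasCDdensity S C D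

/-- `S` is `*`-dense: it has `D`-density for some `0 < D ≤ 1`. -/
def starDense (S : Set ℕ) : Prop := ∃ D, 0 < D ∧ D ≤ 1 ∧ hasDdensity S D

open scoped Classical in
lemma blockSet_eq (S : Set ℕ) {a : ℝ} (ha : 1 < a) (n : ℕ) :
    {m : ℕ | m ∈ S ∧ a ^ n ≤ (m : ℝ) ∧ (m : ℝ) < a ^ (n + 1)} =
      ↑((Finset.Icc (⌈a ^ n⌉₊) (⌈a ^ (n + 1)⌉₊ - 1)).filter (fun m => m ∈ S)) := by
  have ha0 : (0:ℝ) < a := lt_trans one_pos ha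
  have h1 : (0:ℝ) < a ^ (n+1) := by positivity
  have hc1 : 1 ≤ ⌈a ^ (n+1)⌉₊ := Nat.one_le_ceil_iff.mpr h1
  ext m
  simp only [Finset.coe_filter, Set.mem_setOf_eq, Finset.mem_Icc]
  constructor
  · rintro ⟨hS, h1', h2⟩
    have := Nat.lt_ceil.mpr h2
    exact ⟨⟨Nat.ceil_le.mpr h1', by omega⟩, hS⟩
  · rintro ⟨⟨hc, hb⟩, hS⟩
    have hm : m < ⌈a^(n+1)⌉₊ := by omega
    exact ⟨hS, Nat.ceil_le.mp hc, Nat.lt_ceil.mp hm⟩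

set_option maxHeartbeats 1000000 in
open scoped Classical in
lemma forward_dir (S : Set ℕ) (a : ℝ) (ha : 1 < a) (D : ℝ) (hD0 : 0 < D) (hD1 : D < 1)
    (h : ∃ C > 0, ∀ n : ℕ,
        1 - C / a ^ (D * n) ≤
          (({m : ℕ | m ∈ S ∧ a ^ n ≤ (m : ℝ) ∧ (m : ℝ) < a ^ (n + 1)}.ncard : ℝ) /
            (a ^ (n + 1) - a ^ n))) :
    hasDdensity S D := by
  obtain ⟨C, hC, hblk⟩ := h
  have ha0 : (0:ℝ) < a := lt_trans one_pos ha
  set b : ℝ := a ^ ((1:ℝ) - D) with hbdef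
  have hb0 : 0 < b := Real.rpow_pos_of_pos ha0 _
  have hb1 : 1 < b := (Real.one_lt_rpow_iff_of_pos ha0).mpr (Or.inl ⟨ha, by linarith⟩)
  set K : ℝ := (1 + C * (a - 1)) / (b - 1) with hKdef
  have hK : 0 < K := div_pos (by nlinarith) (by linarith)
  have hpowpos : ∀ k : ℕ, (0:ℝ) < a ^ k := fun k => pow_pos ha0 k
  have hpowmono : ∀ k : ℕ, (a:ℝ)^k ≤ a^(k+1) := fun k => by
    rw [pow_succ]; nlinarith [hpowpos k]
  have hceilpos : ∀ k : ℕ, 1 ≤ ⌈(a:ℝ) ^ k⌉₊ := fun k => Nat.one_le_ceil_iff.mpr (hpowpos k)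
  have hbk : ∀ k : ℕ, (a:ℝ)^k / a^(D*(k:ℝ)) = b ^ k := fun k => by
    rw [hbdef, ← Real.rpow_natCast (a ^ ((1:ℝ)-D)) k, ← Real.rpow_mul ha0.le,
      ← Real.rpow_natCast a k, ← Real.rpow_sub ha0]
    congr 1
    ring
  -- per-block miss bound
  have hmiss : ∀ k : ℕ,
      (((Finset.Icc (⌈(a:ℝ)^k⌉₊) (⌈(a:ℝ)^(k+1)⌉₊ - 1)).filter (fun m => m ∉ S)).card : ℝ)
        ≤ 1 + C * (a-1) * b ^ k := by
    intro k
    have hGk : (0:ℝ) < a^(k+1) - a^k := by rw [pow_succ]; nlinarith [hpowpos k]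
    have hblkk := hblk k
    rw [blockSet_eq S ha k, Set.ncard_coe_finset] at hblkk
    have hcnt_lb : (1 - C / a^(D*(k:ℝ))) * (a^(k+1) - a^k) ≤
        (((Finset.Icc (⌈(a:ℝ)^k⌉₊) (⌈(a:ℝ)^(k+1)⌉₊ - 1)).filter (fun m => m ∈ S)).card : ℝ) :=
      (le_div_iff₀ hGk).mp hblkk
    have hsum : ((Finset.Icc (⌈(a:ℝ)^k⌉₊) (⌈(a:ℝ)^(k+1)⌉₊ - 1)).filter (fun m => m ∈ S)).card
        + ((Finset.Icc (⌈(a:ℝ)^k⌉₊) (⌈(a:ℝ)^(k+1)⌉₊ - 1)).filter (fun m => m ∉ S)).card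
        = (⌈(a:ℝ)^(k+1)⌉₊ - 1) + 1 - ⌈(a:ℝ)^k⌉₊ := by
      rw [Finset.card_filter_add_card_filter_not, Nat.card_Icc]
    have hmono : ⌈(a:ℝ)^k⌉₊ ≤ ⌈(a:ℝ)^(k+1)⌉₊ := Nat.ceil_le_ceil (hpowmono k)
    have hcardR : (((⌈(a:ℝ)^(k+1)⌉₊ - 1) + 1 - ⌈(a:ℝ)^k⌉₊ : ℕ) : ℝ)
        ≤ a^(k+1) + 1 - a^k := by
      have h1 : 1 ≤ ⌈(a:ℝ)^(k+1)⌉₊ := hceilpos (k+1)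
      have he : (⌈(a:ℝ)^(k+1)⌉₊ - 1) + 1 = ⌈(a:ℝ)^(k+1)⌉₊ := by omega
      rw [he, Nat.cast_sub hmono]
      have h2 : (⌈(a:ℝ)^(k+1)⌉₊ : ℝ) < a^(k+1) + 1 := Nat.ceil_lt_add_one (hpowpos (k+1)).le
      have h3 : (a:ℝ)^k ≤ (⌈(a:ℝ)^k⌉₊ : ℝ) := Nat.le_ceil _
      linarith
    have hsumR : (((Finset.Icc (⌈(a:ℝ)^k⌉₊) (⌈(a:ℝ)^(k+1)⌉₊ - 1)).filter (fun m => m ∈ S)).card : ℝ)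
        + (((Finset.Icc (⌈(a:ℝ)^k⌉₊) (⌈(a:ℝ)^(k+1)⌉₊ - 1)).filter (fun m => m ∉ S)).card : ℝ)
        = (((⌈(a:ℝ)^(k+1)⌉₊ - 1) + 1 - ⌈(a:ℝ)^k⌉₊ : ℕ) : ℝ) := by exact_mod_cast hsum
    have hGred : (a^(k+1) - a^k) / a^(D*(k:ℝ)) = (a-1) * b^k := by
      have h1 : (a:ℝ)^(k+1) - a^k = (a-1)*a^k := by rw [pow_succ]; ring
      rw [h1, mul_div_assoc, hbk k]
    have hadpos : (0:ℝ) < a ^ (D * (k:ℝ)) := Real.rpow_pos_of_pos ha0 _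
    have e1 : (1 - C / a^(D*(k:ℝ))) * (a^(k+1) - a^k)
        = (a^(k+1) - a^k) - C * ((a^(k+1) - a^k) / a^(D*(k:ℝ))) := by ring
    have e2 : C * ((a^(k+1) - a^k) / a^(D*(k:ℝ))) = C * (a-1) * b^k := by
      rw [hGred]; ring
    linarith [hcnt_lb, hsumR, hcardR, e1, e2]
  -- cumulative miss bound by induction
  have hMiss : ∀ n : ℕ,
      (((Finset.Icc 1 (⌈(a:ℝ)^n⌉₊ - 1)).filter (fun m => m ∉ S)).card : ℝ) ≤ K * b ^ n := by
    intro n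
    induction n with
    | zero =>
      simp only [pow_zero, Nat.ceil_one, Nat.sub_self]
      simp [hK.le]
    | succ n ih =>
      have hceil1 : 1 ≤ ⌈(a:ℝ)^n⌉₊ := hceilpos n
      have hsub : Finset.Icc 1 (⌈(a:ℝ)^(n+1)⌉₊ - 1) ⊆
          Finset.Icc 1 (⌈(a:ℝ)^n⌉₊ - 1) ∪ Finset.Icc (⌈(a:ℝ)^n⌉₊) (⌈(a:ℝ)^(n+1)⌉₊ - 1) := by
        intro m hm
        simp only [Finset.mem_Icc, Finset.mem_union] at *
        omega
      have hcard : ((Finset.Icc 1 (⌈(a:ℝ)^(n+1)⌉₊ - 1)).filter (fun m => m ∉ S)).card ≤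
          ((Finset.Icc 1 (⌈(a:ℝ)^n⌉₊ - 1)).filter (fun m => m ∉ S)).card +
          ((Finset.Icc (⌈(a:ℝ)^n⌉₊) (⌈(a:ℝ)^(n+1)⌉₊ - 1)).filter (fun m => m ∉ S)).card := by
        calc ((Finset.Icc 1 (⌈(a:ℝ)^(n+1)⌉₊ - 1)).filter (fun m => m ∉ S)).card
            ≤ ((Finset.Icc 1 (⌈(a:ℝ)^n⌉₊ - 1) ∪
                Finset.Icc (⌈(a:ℝ)^n⌉₊) (⌈(a:ℝ)^(n+1)⌉₊ - 1)).filter (fun m => m ∉ S)).card :=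
              Finset.card_le_card (Finset.filter_subset_filter _ hsub)
          _ ≤ _ := by rw [Finset.filter_union]; exact Finset.card_union_le _ _
      have hcardR : (((Finset.Icc 1 (⌈(a:ℝ)^(n+1)⌉₊ - 1)).filter (fun m => m ∉ S)).card : ℝ) ≤
          (((Finset.Icc 1 (⌈(a:ℝ)^n⌉₊ - 1)).filter (fun m => m ∉ S)).card : ℝ) +
          (((Finset.Icc (⌈(a:ℝ)^n⌉₊) (⌈(a:ℝ)^(n+1)⌉₊ - 1)).filter (fun m => m ∉ S)).card : ℝ) := by
        exact_mod_cast hcard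
      have hbn : (1:ℝ) ≤ b^n := one_le_pow₀ hb1.le
      have hKb : K * (b-1) = 1 + C*(a-1) := div_mul_cancel₀ _ (by linarith : b - 1 ≠ 0)
      have hm := hmiss n
      have hfin : K * b^n + (1 + C*(a-1)*b^n) ≤ K * b^(n+1) := by
        have expand : K * b^(n+1) = K * b^n + K*(b-1)*b^n := by rw [pow_succ]; ring
        rw [expand, hKb]
        nlinarith [hbn, hC, ha]
      calc (((Finset.Icc 1 (⌈(a:ℝ)^(n+1)⌉₊ - 1)).filter (fun m => m ∉ S)).card : ℝ)
          ≤ _ := hcardR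
        _ ≤ K * b^n + (1 + C*(a-1)*b^n) := by linarith [ih, hm]
        _ ≤ K * b^(n+1) := hfin
  -- conclude density
  refine ⟨K * b, by positivity, ?_⟩
  intro N hN
  have hN1 : (1:ℝ) ≤ (N:ℝ) := by exact_mod_cast hN
  have hex : ∃ m : ℕ, (N:ℝ) < a ^ m := pow_unbounded_of_one_lt _ ha
  have hmspec : (N:ℝ) < a ^ (Nat.find hex) := Nat.find_spec hex
  set m := Nat.find hex with hmdef
  have hm0 : m ≠ 0 := by
    intro h0
    rw [h0, pow_zero] at hmspec
    linarith
  have hmpos : 0 < m := Nat.pos_of_ne_zero hm0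
  have hml : a ^ (m-1) ≤ (N:ℝ) := by
    by_contra hcon
    push_neg at hcon
    exact Nat.find_min hex (Nat.sub_lt hmpos one_pos) hcon
  have hNle : N ≤ ⌈(a:ℝ)^m⌉₊ - 1 := by
    have : N < ⌈(a:ℝ)^m⌉₊ := Nat.lt_ceil.mpr hmspec
    omega
  have hmonoMiss : ((Finset.Icc 1 N).filter (fun m => m ∉ S)).card ≤
      ((Finset.Icc 1 (⌈(a:ℝ)^m⌉₊ - 1)).filter (fun m => m ∉ S)).card :=
    Finset.card_le_card (Finset.filter_subset_filter _ (Finset.Icc_subset_Icc_right hNle))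
  have hNpos : (0:ℝ) < N := by linarith
  have hbm : b^m ≤ b * (N:ℝ)^((1:ℝ)-D) := by
    have h1 : b^m = b * b^(m-1) := by
      conv_lhs => rw [← Nat.succ_pred_eq_of_pos hmpos]
      rw [pow_succ, Nat.pred_eq_sub_one]
      ring
    have e : b^(m-1) = ((a:ℝ)^(m-1)) ^ ((1:ℝ)-D) := by
      rw [hbdef, ← Real.rpow_natCast (a^((1:ℝ)-D)) (m-1), ← Real.rpow_mul ha0.le,
        mul_comm, Real.rpow_mul ha0.le, Real.rpow_natCast]
    have h2 : b^(m-1) ≤ (N:ℝ)^((1:ℝ)-D) := by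
      rw [e]
      exact Real.rpow_le_rpow (hpowpos (m-1)).le hml (by linarith)
    rw [h1]
    nlinarith [hb0, h2]
  have hsum : (countIn S N) + ((Finset.Icc 1 N).filter (fun m => m ∉ S)).card = N := by
    unfold countIn
    rw [Finset.card_filter_add_card_filter_not, Nat.card_Icc]
    omega
  have hcnt : (countIn S N : ℝ) = (N:ℝ) - (((Finset.Icc 1 N).filter (fun m => m ∉ S)).card : ℝ) := by
    have := congrArg (fun x : ℕ => (x:ℝ)) hsum
    push_cast at this
    linarith
  have hmissR : (((Finset.Icc 1 N).filter (fun m => m ∉ S)).card : ℝ) ≤ K * b * (N:ℝ)^((1:ℝ)-D) := by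
    calc (((Finset.Icc 1 N).filter (fun m => m ∉ S)).card : ℝ)
        ≤ (((Finset.Icc 1 (⌈(a:ℝ)^m⌉₊ - 1)).filter (fun m => m ∉ S)).card : ℝ) := by
          exact_mod_cast hmonoMiss
      _ ≤ K * b^m := hMiss m
      _ ≤ K * (b * (N:ℝ)^((1:ℝ)-D)) := mul_le_mul_of_nonneg_left hbm hK.le
      _ = K * b * (N:ℝ)^((1:ℝ)-D) := by ring
  have hNd : (N:ℝ) / (N:ℝ)^D = (N:ℝ)^((1:ℝ)-D) := by
    rw [Real.rpow_sub hNpos, Real.rpow_one]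
  rw [le_div_iff₀ hNpos]
  have e : (1 - K*b/(N:ℝ)^D) * (N:ℝ) = (N:ℝ) - K*b*((N:ℝ)/(N:ℝ)^D) := by ring
  rw [e, hNd, hcnt]
  linarith [hmissR]

set_option maxHeartbeats 1000000 in
open scoped Classical in
lemma converse_dir (S : Set ℕ) (a : ℝ) (ha : 1 < a) (D : ℝ) (hD0 : 0 < D) (hD1 : D < 1)
    (h : hasDdensity S D) :
    ∃ C' > 0, ∀ n : ℕ,
        1 - C' / a ^ (D * n) ≤
          (({m : ℕ | m ∈ S ∧ a ^ n ≤ (m : ℝ) ∧ (m : ℝ) < a ^ (n + 1)}.ncard : ℝ) /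
            (a ^ (n + 1) - a ^ n)) := by
  obtain ⟨C, hC, hSd⟩ := h
  have ha0 : (0:ℝ) < a := lt_trans one_pos ha
  have hs0 : (0:ℝ) < a ^ ((1:ℝ)-D) := Real.rpow_pos_of_pos ha0 _
  refine ⟨(1 + C * a ^ ((1:ℝ)-D)) / (a - 1), div_pos (by positivity) (by linarith), ?_⟩
  intro n
  rw [blockSet_eq S ha n, Set.ncard_coe_finset]
  set C' : ℝ := (1 + C * a ^ ((1:ℝ)-D)) / (a - 1) with hC'def
  set c := ⌈a ^ n⌉₊ with hcdef
  set bb := ⌈a ^ (n+1)⌉₊ - 1 with hbbdef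
  have hanp : (0:ℝ) < a ^ n := by positivity
  have han1p : (0:ℝ) < a ^ (n+1) := by positivity
  have han : (1:ℝ) ≤ a ^ n := one_le_pow₀ ha.le
  have han1 : (1:ℝ) < a ^ (n+1) := by
    calc (1:ℝ) ≤ a ^ n := han
    _ < a ^ (n+1) := by rw [pow_succ]; nlinarith
  have hc1 : 1 ≤ c := Nat.one_le_ceil_iff.mpr hanp
  have hceil2 : 1 < ⌈a^(n+1)⌉₊ := Nat.lt_ceil.mpr (by exact_mod_cast han1)
  have hbb1 : 1 ≤ bb := by omega
  have hbbcast : (bb:ℝ) = (⌈a^(n+1)⌉₊ : ℝ) - 1 := by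
    rw [hbbdef, Nat.cast_sub (by omega), Nat.cast_one]
  have hbb_lb : a ^ (n+1) - 1 ≤ (bb:ℝ) := by
    rw [hbbcast]; linarith [Nat.le_ceil (a^(n+1))]
  have hbb_ub : (bb:ℝ) ≤ a ^ (n+1) := by
    rw [hbbcast]
    have := Nat.ceil_lt_add_one han1p.le
    linarith
  have hc_ub : (c:ℝ) - 1 ≤ a ^ n := by
    have := Nat.ceil_lt_add_one hanp.le
    linarith
  -- splitting the count
  have hsplit : countIn S bb ≤ countIn S (c-1) +
      (Finset.filter (fun m => m ∈ S) (Finset.Icc c bb)).card := by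
    unfold countIn
    have hsub : Finset.Icc 1 bb ⊆ Finset.Icc 1 (c-1) ∪ Finset.Icc c bb := by
      intro m hm
      simp only [Finset.mem_Icc, Finset.mem_union] at *
      omega
    calc (Finset.filter (fun m => m ∈ S) (Finset.Icc 1 bb)).card
        ≤ (Finset.filter (fun m => m ∈ S) (Finset.Icc 1 (c-1) ∪ Finset.Icc c bb)).card :=
          Finset.card_le_card (Finset.filter_subset_filter _ hsub)
      _ ≤ _ := by rw [Finset.filter_union]; exact Finset.card_union_le _ _
  have hcnt1 : countIn S (c-1) ≤ c - 1 := by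
    unfold countIn
    calc (Finset.filter (fun m => m ∈ S) (Finset.Icc 1 (c-1))).card
        ≤ (Finset.Icc 1 (c-1)).card := Finset.card_filter_le _ _
      _ = c - 1 := by rw [Nat.card_Icc]; omega
  -- density at bb
  have hbbR : (0:ℝ) < bb := by exact_mod_cast hbb1
  have hDpos : (0:ℝ) < (bb:ℝ)^D := Real.rpow_pos_of_pos hbbR D
  have hd := hSd bb hbb1
  have hcount_lb : (bb:ℝ) - C * (bb:ℝ) ^ ((1:ℝ)-D) ≤ (countIn S bb : ℝ) := by
    have h2 : (1 - C / (bb:ℝ)^D) * bb ≤ countIn S bb := (le_div_iff₀ hbbR).mp hd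
    have h3 : (bb:ℝ) ^ ((1:ℝ)-D) = bb / (bb:ℝ)^D := by
      rw [Real.rpow_sub hbbR, Real.rpow_one]
    rw [h3]
    have : (1 - C / (bb:ℝ)^D) * bb = bb - C * (bb / (bb:ℝ)^D) := by ring
    linarith [h2, this ▸ h2]
  have key : (bb:ℝ) - C * (bb:ℝ)^((1:ℝ)-D) - ((c:ℝ) - 1) ≤
      ((Finset.filter (fun m => m ∈ S) (Finset.Icc c bb)).card : ℝ) := by
    have h1 : (countIn S (c-1) : ℝ) ≤ (c:ℝ) - 1 := by
      calc (countIn S (c-1):ℝ) ≤ ((c-1:ℕ):ℝ) := by exact_mod_cast hcnt1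
        _ = (c:ℝ) - 1 := by rw [Nat.cast_sub hc1, Nat.cast_one]
    have h2 : (countIn S bb : ℝ) ≤ (countIn S (c-1):ℝ) +
        ((Finset.filter (fun m => m ∈ S) (Finset.Icc c bb)).card : ℝ) := by
      exact_mod_cast hsplit
    linarith
  -- rpow bounds
  set t : ℝ := a ^ (((1:ℝ)-D) * n) with htdef
  have ht0 : 0 < t := Real.rpow_pos_of_pos ha0 _
  have hrw : (bb:ℝ)^((1:ℝ)-D) ≤ a ^ ((1:ℝ)-D) * t := by
    have h1 : (bb:ℝ)^((1:ℝ)-D) ≤ (a^(n+1)) ^ ((1:ℝ)-D) :=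
      Real.rpow_le_rpow hbbR.le hbb_ub (by linarith)
    have h2 : ((a^(n+1):ℝ)) ^ ((1:ℝ)-D) = a ^ ((1:ℝ)-D) * t := by
      rw [htdef, ← Real.rpow_natCast a (n+1), ← Real.rpow_mul ha0.le,
        ← Real.rpow_add ha0]
      congr 1
      push_cast
      ring
    linarith [h2 ▸ h1]
  have hone : (1:ℝ) ≤ t := Real.one_le_rpow ha.le (mul_nonneg (by linarith) (Nat.cast_nonneg n))
  have hG : (0:ℝ) < a^(n+1) - a^n := by rw [pow_succ]; nlinarith
  have hadpos : (0:ℝ) < a ^ (D * (n:ℝ)) := Real.rpow_pos_of_pos ha0 _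
  have hGred : (a^(n+1) - a^n)/a^(D * (n:ℝ)) = (a-1) * t := by
    have h1 : a^(n+1) - a^n = (a-1)*a^n := by rw [pow_succ]; ring
    have h2 : (a:ℝ)^n / a^(D * (n:ℝ)) = t := by
      rw [htdef, ← Real.rpow_natCast a n, ← Real.rpow_sub ha0]
      congr 1
      ring
    rw [h1, mul_div_assoc, h2]
  have hane : a - 1 ≠ 0 := by linarith
  have hC'G : C' * ((a^(n+1)-a^n)/a^(D * (n:ℝ))) = (1 + C * a ^ ((1:ℝ)-D)) * t := by
    rw [hGred]
    have hca : C' * (a - 1) = 1 + C * a ^ ((1:ℝ)-D) := div_mul_cancel₀ _ hane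
    calc C' * ((a-1) * t) = (C' * (a-1)) * t := by ring
      _ = (1 + C * a ^ ((1:ℝ)-D)) * t := by rw [hca]
  rw [le_div_iff₀ hG]
  have e1 : (1 - C'/a^(D * (n:ℝ))) * (a^(n+1) - a^n)
      = (a^(n+1) - a^n) - C' * ((a^(n+1)-a^n)/a^(D * (n:ℝ))) := by ring
  have e2 : (1 + C * a ^ ((1:ℝ)-D)) * t = t + C * a ^ ((1:ℝ)-D) * t := by ring
  have hrwC : C * (bb:ℝ)^((1:ℝ)-D) ≤ C * (a ^ ((1:ℝ)-D) * t) :=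
    mul_le_mul_of_nonneg_left hrw hC.le
  have hst : C * (a ^ ((1:ℝ)-D) * t) = C * a ^ ((1:ℝ)-D) * t := by ring
  linarith [e1, hC'G, e2, hone, key, hbb_lb, hc_ub, hrwC, hst]

theorem density_on_geometric_blocks (S : Set ℕ) (a : ℝ) (ha : 1 < a)
    (D : ℝ) (hD0 : 0 < D) (hD1 : D < 1) :
    ((∃ C > 0, ∀ n : ℕ,
        1 - C / a ^ (D * n) ≤
          (({m : ℕ | m ∈ S ∧ a ^ n ≤ (m : ℝ) ∧ (m : ℝ) < a ^ (n + 1)}.ncard : ℝ) /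
            (a ^ (n + 1) - a ^ n))) →
      hasDdensity S D) ∧
    (hasDdensity S D →
      ∃ C' > 0, ∀ n : ℕ,
        1 - C' / a ^ (D * n) ≤
          (({m : ℕ | m ∈ S ∧ a ^ n ≤ (m : ℝ) ∧ (m : ℝ) < a ^ (n + 1)}.ncard : ℝ) /
            (a ^ (n + 1) - a ^ n))) := by
  exact ⟨forward_dir S a ha D hD0 hD1, converse_dir S a ha D hD0 hD1⟩
end

section
/- For every ε > 0, the set {m ∈ ℤ⁺ : for all natural numbers k with 0 ≤ k ≤ log₂ m, (√3/2)^k · m^(1−ε) ≤ T^k(m) ≤ (√3/2)^k · m^(1+ε)} is *-dense. -/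
/-- number of odd steps among the first `k` iterates -/
def aa (m k : ℕ) : ℕ := ∑ j ∈ Finset.range k, parity m j

/-- the offset term in the exact formula for `T^[k]` -/
def rr (m : ℕ) : ℕ → ℕ
  | 0 => 0
  | k+1 => 3 ^ parity m k * rr m k + parity m k * 2 ^ k

lemma parity_le_one (m k : ℕ) : parity m k ≤ 1 := Nat.le_of_lt_succ (Nat.mod_lt _ (by norm_num))

lemma two_mul_T (x : ℕ) : 2 * T x = 3 ^ (x % 2) * x + x % 2 := by
  rcases Nat.mod_two_eq_zero_or_one x with h | h <;> simp [T, h]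
  · omega
  · have h2 : (3 * x + 1) % 2 = 0 := by omega
    omega

lemma key_formula (m k : ℕ) : 2 ^ k * T^[k] m = 3 ^ aa m k * m + rr m k := by
  induction k with
  | zero => simp [aa, rr]
  | succ k ih =>
    have h1 : T^[k+1] m = T (T^[k] m) := Function.iterate_succ_apply' T k m
    have h2 : 2 ^ (k+1) * T^[k+1] m = 2 ^ k * (2 * T (T^[k] m)) := by rw [h1]; ring
    rw [h2, two_mul_T]
    have hp : T^[k] m % 2 = parity m k := rfl
    rw [hp, Nat.mul_add, ← Nat.mul_assoc, Nat.mul_comm (2^k) (3 ^ parity m k),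
      Nat.mul_assoc, ih]
    have haa : aa m (k+1) = aa m k + parity m k := Finset.sum_range_succ _ _
    have hrr : rr m (k+1) = 3 ^ parity m k * rr m k + parity m k * 2 ^ k := rfl
    rw [haa, hrr, pow_add]
    ring

lemma rr_bound (m k : ℕ) : rr m k + 2 ^ k ≤ 3 ^ aa m k * 2 ^ k := by
  induction k with
  | zero => simp [aa, rr]
  | succ k ih =>
    have ha : aa m (k+1) = aa m k + parity m k := Finset.sum_range_succ _ _
    have hrr : rr m (k+1) = 3 ^ parity m k * rr m k + parity m k * 2 ^ k := rfl
    rw [hrr, ha]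
    have h1 : (1:ℕ) ≤ 3 ^ aa m k := Nat.one_le_two_pow.trans (Nat.pow_le_pow_left (by norm_num) _) |>.trans (le_refl _) |>.trans (le_refl _)
    rcases Nat.eq_zero_or_pos (parity m k) with h | h
    · rw [h]; simp only [pow_zero, one_mul, zero_mul, add_zero]
      calc rr m k + 2 ^ (k+1) = (rr m k + 2^k) + 2^k := by ring
        _ ≤ 3 ^ aa m k * 2 ^ k + 3 ^ aa m k * 2 ^ k := by
            have : (2:ℕ)^k ≤ 3 ^ aa m k * 2^k := Nat.le_mul_of_pos_left _ (by positivity)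
            omega
        _ = 3 ^ (aa m k + 0) * 2 ^ (k+1) := by ring
    · have h' : parity m k = 1 := le_antisymm (parity_le_one m k) h
      rw [h']
      calc 3 ^ 1 * rr m k + 1 * 2 ^ k + 2 ^ (k+1) = 3 * (rr m k + 2 ^ k) := by ring
        _ ≤ 3 * (3 ^ aa m k * 2 ^ k) := by omega
        _ ≤ 3 ^ (aa m k + 1) * 2 ^ (k+1) := by rw [pow_add, pow_add]; ring_nf; omega

lemma lower_nat (m k : ℕ) : 3 ^ aa m k * m ≤ 2 ^ k * T^[k] m := by
  rw [key_formula]; omega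

lemma upper_nat (m k : ℕ) : 2 ^ k * T^[k] m + 2 ^ k ≤ 3 ^ aa m k * (m + 2 ^ k) := by
  rw [key_formula, Nat.mul_add]
  have := rr_bound m k
  omega

lemma congr_parity (m m' k : ℕ) (h : ∀ j < k, parity m j = parity m' j) :
    aa m k = aa m' k ∧ rr m k = rr m' k := by
  induction k with
  | zero => simp [aa, rr]
  | succ k ih =>
    obtain ⟨h1, h2⟩ := ih (fun j hj => h j (by omega))
    have hp : parity m k = parity m' k := h k (by omega)
    constructor
    · have e1 : aa m (k+1) = aa m k + parity m k := Finset.sum_range_succ _ _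
      have e2 : aa m' (k+1) = aa m' k + parity m' k := Finset.sum_range_succ _ _
      rw [e1, e2, h1, hp]
    · have e1 : rr m (k+1) = 3 ^ parity m k * rr m k + parity m k * 2 ^ k := rfl
      have e2 : rr m' (k+1) = 3 ^ parity m' k * rr m' k + parity m' k * 2 ^ k := rfl
      rw [e1, e2, h2, hp]

/-! ### Parity vectors and counting -/

def vec (n m : ℕ) : Fin n → Bool := fun j => decide (parity m (j : ℕ) = 1)

def sB (n k : ℕ) (v : Fin n → Bool) : ℕ :=
  ∑ j : Fin n, if (j : ℕ) < k ∧ v j = true then 1 else 0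

def zB (n k : ℕ) (v : Fin n → Bool) : ℕ :=
  ∑ j : Fin n, if (j : ℕ) < k ∧ v j = false then 1 else 0

lemma sum_fin_lt (n k : ℕ) (hk : k ≤ n) (f : ℕ → ℕ) :
    (∑ j : Fin n, if (j : ℕ) < k then f (j : ℕ) else 0) = ∑ j ∈ Finset.range k, f j := by
  rw [Fin.sum_univ_eq_sum_range (fun j => if j < k then f j else 0) n]
  rw [← Finset.sum_subset (Finset.range_subset_range.2 hk)
    (fun x _ hx => if_neg (fun h => hx (Finset.mem_range.2 h)))]
  exact Finset.sum_congr rfl fun x hx => if_pos (Finset.mem_range.1 hx)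

lemma sB_vec (m n k : ℕ) (hk : k ≤ n) : sB n k (vec n m) = aa m k := by
  have h1 : ∀ j : Fin n, (if (j : ℕ) < k ∧ vec n m j = true then 1 else 0)
      = (if (j : ℕ) < k then (fun i => if parity m i = 1 then 1 else 0) (j : ℕ) else 0) := by
    intro j
    by_cases h : (j : ℕ) < k <;> simp [vec, h]
  rw [sB, Finset.sum_congr rfl (fun j _ => h1 j), sum_fin_lt n k hk (fun i => if parity m i = 1 then 1 else 0)]
  refine Finset.sum_congr rfl fun j _ => ?_
  have := parity_le_one m j
  interval_cases h : parity m j <;> simp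

lemma sB_add_zB (n k : ℕ) (hk : k ≤ n) (v : Fin n → Bool) : sB n k v + zB n k v = k := by
  rw [sB, zB, ← Finset.sum_add_distrib]
  have h1 : ∀ j : Fin n, ((if (j : ℕ) < k ∧ v j = true then 1 else 0)
      + if (j : ℕ) < k ∧ v j = false then 1 else 0)
      = (if (j : ℕ) < k then (fun _ => 1) (j : ℕ) else 0) := by
    intro j
    cases hv : v j <;> by_cases h : (j : ℕ) < k <;> simp [h, hv]
  rw [Finset.sum_congr rfl (fun j _ => h1 j), sum_fin_lt n k hk (fun _ => 1)]
  simp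

lemma card_filter_lt (n k : ℕ) (hk : k ≤ n) :
    (Finset.univ.filter (fun j : Fin n => (j : ℕ) < k)).card = k := by
  rw [Finset.card_filter]
  have := sum_fin_lt n k hk (fun _ => 1)
  simp only [Finset.sum_const, smul_eq_mul, mul_one, Finset.card_range] at this
  simpa using this

lemma mgf_aux (q : ℝ) (n k : ℕ) (hk : k ≤ n) (P : Bool → Prop) [DecidablePred P]
    (hP : ∃! b, P b) (s : (Fin n → Bool) → ℕ)
    (hs : ∀ v, s v = ∑ j : Fin n, if (j : ℕ) < k ∧ P (v j) then 1 else 0) :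
    ∑ v : Fin n → Bool, q ^ (2 * s v) = (1 + q ^ 2) ^ k * 2 ^ (n - k) := by
  have step : ∀ v : Fin n → Bool,
      q ^ (2 * s v) = ∏ j : Fin n, (if (j : ℕ) < k ∧ P (v j) then q ^ 2 else 1) := by
    intro v
    rw [hs, Finset.mul_sum]
    have : ∀ j : Fin n, 2 * (if (j : ℕ) < k ∧ P (v j) then 1 else 0)
        = (if (j : ℕ) < k ∧ P (v j) then 2 else 0) := by intro j; split <;> ring
    rw [Finset.sum_congr rfl (fun j _ => this j), ← Finset.prod_pow_eq_pow_sum]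
    exact Finset.prod_congr rfl fun j _ => by split <;> simp
  rw [Finset.sum_congr rfl (fun v _ => step v)]
  rw [← Fintype.prod_sum (fun (j : Fin n) (b : Bool) => if (j : ℕ) < k ∧ P b then q ^ 2 else 1)]
  have hbool : ∀ j : Fin n, (∑ b : Bool, if (j : ℕ) < k ∧ P b then q ^ 2 else 1)
      = if (j : ℕ) < k then q ^ 2 + 1 else 2 := by
    intro j
    obtain ⟨b, hb, hub⟩ := hP
    have hx : ∀ c : Bool, P c ↔ c = b := fun c => ⟨fun h => hub c h, fun h => h ▸ hb⟩
    by_cases h : (j : ℕ) < k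
    · rw [Fintype.sum_bool]
      cases b <;> simp [hx, h] <;> ring
    · simp [h]
  rw [Finset.prod_congr rfl (fun j _ => hbool j)]
  rw [Finset.prod_ite (fun _ => q ^ 2 + 1) (fun _ => (2:ℝ))]
  rw [Finset.prod_const, Finset.prod_const, card_filter_lt n k hk]
  have hcard : (Finset.univ.filter (fun j : Fin n => ¬ (j : ℕ) < k)).card = n - k := by
    have h2 := Finset.card_filter_add_card_filter_not
      (s := (Finset.univ : Finset (Fin n))) (p := fun j : Fin n => (j : ℕ) < k)
    rw [card_filter_lt n k hk, Finset.card_univ, Fintype.card_fin] at h2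
    omega
  rw [hcard, add_comm (q^2) 1]

lemma mgf_sB (q : ℝ) (n k : ℕ) (hk : k ≤ n) :
    ∑ v : Fin n → Bool, q ^ (2 * sB n k v) = (1 + q ^ 2) ^ k * 2 ^ (n - k) :=
  mgf_aux q n k hk (fun b => b = true) ⟨true, rfl, fun _ hb => hb⟩ _ (fun _ => rfl)

lemma mgf_zB (q : ℝ) (n k : ℕ) (hk : k ≤ n) :
    ∑ v : Fin n → Bool, q ^ (2 * zB n k v) = (1 + q ^ 2) ^ k * 2 ^ (n - k) :=
  mgf_aux q n k hk (fun b => b = false) ⟨false, rfl, fun _ hb => hb⟩ _ (fun _ => rfl)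

lemma tail_card (q : ℝ) (hq : 1 ≤ q) {n k : ℕ} (c : ℕ) (s : (Fin n → Bool) → ℕ)
    (hmgf : ∑ v : Fin n → Bool, q ^ (2 * s v) = (1 + q ^ 2) ^ k * 2 ^ (n - k)) :
    ((Finset.univ.filter (fun v => c ≤ 2 * s v)).card : ℝ) * q ^ c
      ≤ (1 + q ^ 2) ^ k * 2 ^ (n - k) := by
  have hq0 : (0:ℝ) < q := lt_of_lt_of_le one_pos hq
  rw [← hmgf]
  calc ((Finset.univ.filter (fun v => c ≤ 2 * s v)).card : ℝ) * q ^ c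
      = ∑ _v ∈ Finset.univ.filter (fun v => c ≤ 2 * s v), q ^ c := by
        rw [Finset.sum_const, nsmul_eq_mul]
    _ ≤ ∑ v ∈ Finset.univ.filter (fun v => c ≤ 2 * s v), q ^ (2 * s v) :=
        Finset.sum_le_sum fun v hv =>
          pow_le_pow_right₀ hq (Finset.mem_filter.1 hv).2
    _ ≤ ∑ v : Fin n → Bool, q ^ (2 * s v) :=
        Finset.sum_le_sum_of_subset_of_nonneg (Finset.filter_subset _ _)
          (fun v _ _ => by positivity)

noncomputable def tn (ε : ℝ) (n : ℕ) : ℕ := ⌈ε / 2 * n⌉₊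

def BadV (ε : ℝ) (n : ℕ) (v : Fin n → Bool) : Prop :=
  ∃ k, k ≤ n ∧ (k + tn ε n < 2 * sB n k v ∨ 2 * sB n k v + tn ε n < k)

open scoped Classical in
noncomputable def BnF (ε : ℝ) (n : ℕ) : Finset (Fin n → Bool) :=
  Finset.univ.filter (fun v => BadV ε n v)

lemma card_BnF_le (ε q : ℝ) (hq : 1 ≤ q) (n : ℕ) :
    ((BnF ε n).card : ℝ) ≤ ∑ k ∈ Finset.range (n+1),
      2 * ((1 + q ^ 2) ^ k * 2 ^ (n - k) / q ^ (k + tn ε n + 1)) := by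
  classical
  have hq0 : (0:ℝ) < q := lt_of_lt_of_le one_pos hq
  set t := tn ε n with ht
  set U : ℕ → Finset (Fin n → Bool) :=
    fun k => Finset.univ.filter (fun v => k + t + 1 ≤ 2 * sB n k v) with hU
  set L : ℕ → Finset (Fin n → Bool) :=
    fun k => Finset.univ.filter (fun v => k + t + 1 ≤ 2 * zB n k v) with hL
  have hsub : BnF ε n ⊆ (Finset.range (n+1)).biUnion (fun k => U k ∪ L k) := by
    intro v hv
    rw [BnF, Finset.mem_filter] at hv
    obtain ⟨-, k, hk, hbad⟩ := hv
    refine Finset.mem_biUnion.2 ⟨k, Finset.mem_range.2 (by omega), ?_⟩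
    rcases hbad with h | h
    · exact Finset.mem_union_left _ (Finset.mem_filter.2 ⟨Finset.mem_univ _, by omega⟩)
    · have hz := sB_add_zB n k hk v
      exact Finset.mem_union_right _ (Finset.mem_filter.2 ⟨Finset.mem_univ _, by omega⟩)
  have h1 : (BnF ε n).card ≤ ∑ k ∈ Finset.range (n+1), ((U k).card + (L k).card) :=
    le_trans (Finset.card_le_card hsub)
      (le_trans (Finset.card_biUnion_le)
        (Finset.sum_le_sum fun k _ => Finset.card_union_le _ _))
  have h2 : ((BnF ε n).card : ℝ) ≤ ∑ k ∈ Finset.range (n+1), (((U k).card : ℝ) + (L k).card) := by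
    exact_mod_cast h1
  refine h2.trans (Finset.sum_le_sum fun k hk => ?_)
  have hkn : k ≤ n := by have := Finset.mem_range.1 hk; omega
  have hUb : ((U k).card : ℝ) ≤ (1 + q ^ 2) ^ k * 2 ^ (n - k) / q ^ (k + t + 1) := by
    rw [le_div_iff₀ (by positivity)]
    exact tail_card q hq (k + t + 1) (sB n k) (mgf_sB q n k hkn)
  have hLb : ((L k).card : ℝ) ≤ (1 + q ^ 2) ^ k * 2 ^ (n - k) / q ^ (k + t + 1) := by
    rw [le_div_iff₀ (by positivity)]
    exact tail_card q hq (k + t + 1) (zB n k) (mgf_zB q n k hkn)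
  linarith

/-! ### The analytic constants -/

noncomputable def qq (ε : ℝ) : ℝ := 1 + ε / 4
noncomputable def hh (ε : ℝ) : ℝ := qq ε + 1 / qq ε
noncomputable def qe (ε : ℝ) : ℝ := (qq ε) ^ (ε / 2 : ℝ)
noncomputable def rho (ε : ℝ) : ℝ := hh ε / (2 * qe ε)
noncomputable def rho2 (ε : ℝ) : ℝ := (1 + rho ε) / 2
noncomputable def del (ε : ℝ) : ℝ := (1 - rho ε) / (2 * rho ε)

section Constants
variable {ε : ℝ} (hε : 0 < ε) (hε2 : ε ≤ 1/2)
include hε hε2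

lemma qq_gt : 1 < qq ε := by unfold qq; linarith
lemma qq_le : qq ε ≤ 9/8 := by unfold qq; linarith
lemma hh_ge : 2 ≤ hh ε := by
  have h1 : (0:ℝ) < qq ε := lt_trans one_pos (qq_gt hε hε2)
  have h2 : (qq ε - 1)^2 ≥ 0 := sq_nonneg _
  rw [hh, ← sub_nonneg]
  have : qq ε + 1 / qq ε - 2 = (qq ε - 1)^2 / qq ε := by field_simp; ring
  rw [this]; positivity
lemma qe_ge_one : 1 ≤ qe ε :=
  Real.one_le_rpow (qq_gt hε hε2).le (by linarith)
lemma qe_le_qq : qe ε ≤ qq ε := by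
  have := Real.rpow_le_rpow_of_exponent_le (qq_gt hε hε2).le (by linarith : ε / 2 ≤ 1)
  rwa [Real.rpow_one] at this
lemma key_lt : hh ε < 2 * qe ε := by
  have hq1 : 1 < qq ε := qq_gt hε hε2
  have hq0 : (0:ℝ) < qq ε := lt_trans one_pos hq1
  have hlog : 1 - 1 / qq ε ≤ Real.log (qq ε) := by
    have h := Real.log_le_sub_one_of_pos (x := (qq ε)⁻¹) (by positivity)
    rw [Real.log_inv] at h
    have : 1 / qq ε = (qq ε)⁻¹ := one_div _
    linarith
  have hqe : 1 + (ε / 2) * (1 - 1 / qq ε) ≤ qe ε := by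
    rw [qe, Real.rpow_def_of_pos hq0]
    have h1 : (ε / 2) * (1 - 1 / qq ε) ≤ (ε / 2) * Real.log (qq ε) :=
      mul_le_mul_of_nonneg_left hlog (by linarith)
    have h2 := Real.add_one_le_exp (Real.log (qq ε) * (ε / 2))
    have hc : Real.log (qq ε) * (ε / 2) = (ε / 2) * Real.log (qq ε) := mul_comm _ _
    linarith [h2]
  rw [hh]
  have hqv : qq ε - 1 = ε / 4 := by rw [qq]; ring
  have e : 2 * (1 + (ε / 2) * (1 - 1 / qq ε)) - (qq ε + 1 / qq ε)
      = (qq ε - 1) * (ε - (qq ε - 1)) / qq ε := by field_simp; ring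
  have e2 : (qq ε - 1) * (ε - (qq ε - 1)) / qq ε = ε / 4 * (3 * ε / 4) / qq ε := by
    rw [hqv]; ring
  have hpos : 0 < ε / 4 * (3 * ε / 4) / qq ε := by positivity
  linarith
lemma rho_lt_one : rho ε < 1 := by
  have h1 : (0:ℝ) < 2 * qe ε := by have := qe_ge_one hε hε2; linarith
  rw [rho, div_lt_one h1]
  exact key_lt hε hε2
lemma rho_ge_half : 1/2 ≤ rho ε := by
  have h1 : qe ε ≤ 9/8 := le_trans (qe_le_qq hε hε2) (qq_le hε hε2)
  have h2 : 1 ≤ qe ε := qe_ge_one hε hε2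
  have h3 : 2 ≤ hh ε := hh_ge hε hε2
  rw [rho, le_div_iff₀ (by linarith)]
  linarith
lemma rho_pos : 0 < rho ε := lt_of_lt_of_le (by norm_num) (rho_ge_half hε hε2)
lemma del_pos : 0 < del ε := by
  have h1 := rho_lt_one hε hε2
  have h2 := rho_pos hε hε2
  rw [del]
  exact div_pos (by linarith) (by linarith)
lemma del_le_one : del ε ≤ 1 := by
  have h1 := rho_ge_half hε hε2
  have h2 := rho_pos hε hε2
  rw [del, div_le_one (by linarith)]
  linarith
lemma rho2_lt_one : rho2 ε < 1 := by have := rho_lt_one hε hε2; rw [rho2]; linarith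
lemma rho2_ge : 3/4 ≤ rho2 ε := by have := rho_ge_half hε hε2; rw [rho2]; linarith
lemma rho2_eq : (1 + del ε) * rho ε = rho2 ε := by
  have h2 := rho_pos hε hε2
  rw [del, rho2]; field_simp; ring

lemma BnF_bound (n : ℕ) : ((BnF ε n).card : ℝ) ≤ (2 / del ε) * (2 * rho2 ε) ^ n := by
  have hq1 : 1 < qq ε := qq_gt hε hε2
  have hq0 : (0:ℝ) < qq ε := lt_trans one_pos hq1
  have hqe1 : 1 ≤ qe ε := qe_ge_one hε hε2
  have hqe0 : (0:ℝ) < qe ε := lt_of_lt_of_le one_pos hqe1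
  have hh2 : 2 ≤ hh ε := hh_ge hε hε2
  have hh0 : (0:ℝ) < hh ε := lt_of_lt_of_le (by norm_num) hh2
  set t := tn ε n with htdef
  -- step 1: card ≤ (n+1) * (2 * hh^n / qe^n)
  have step1 : ((BnF ε n).card : ℝ) ≤ (n + 1) * (2 * (hh ε ^ n / qe ε ^ n)) := by
    refine (card_BnF_le ε (qq ε) hq1.le n).trans ?_
    have hterm : ∀ k ∈ Finset.range (n+1),
        2 * ((1 + qq ε ^ 2) ^ k * 2 ^ (n - k) / qq ε ^ (k + t + 1))
          ≤ 2 * (hh ε ^ n / qe ε ^ n) := by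
      intro k hk
      have hkn : k ≤ n := by have := Finset.mem_range.1 hk; omega
      have e1 : (1 + qq ε ^ 2) ^ k * 2 ^ (n - k) / qq ε ^ (k + t + 1)
          = (hh ε ^ k * 2 ^ (n - k)) / qq ε ^ (t + 1) := by
        rw [hh]
        have : qq ε + 1 / qq ε = (1 + qq ε ^ 2) / qq ε := by field_simp; ring
        rw [this, div_pow, pow_add, pow_add]
        field_simp
        ring
      rw [e1]
      have e2 : hh ε ^ k * 2 ^ (n - k) ≤ hh ε ^ n := by
        calc hh ε ^ k * 2 ^ (n - k) ≤ hh ε ^ k * hh ε ^ (n - k) := by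
              have := pow_le_pow_left₀ (by norm_num : (0:ℝ) ≤ 2) hh2 (n - k)
              have hp : (0:ℝ) < hh ε ^ k := by positivity
              nlinarith [pow_nonneg (le_of_lt hh0) k]
          _ = hh ε ^ n := by rw [← pow_add]; congr 1; omega
      have e3 : qe ε ^ n ≤ qq ε ^ (t + 1) := by
        have h1 : qe ε ^ n = qq ε ^ ((ε / 2) * n : ℝ) := by
          rw [qe, ← Real.rpow_natCast ((qq ε) ^ (ε/2 : ℝ)) n, ← Real.rpow_mul (le_of_lt hq0)]
        have h2 : ((ε / 2) * n : ℝ) ≤ ((t + 1 : ℕ) : ℝ) := by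
          have := Nat.le_ceil (ε / 2 * n)
          push_cast
          rw [htdef, tn] at *
          push_cast at this ⊢
          linarith [this]
        calc qe ε ^ n = qq ε ^ ((ε / 2) * n : ℝ) := h1
          _ ≤ qq ε ^ (((t + 1 : ℕ) : ℝ)) := Real.rpow_le_rpow_of_exponent_le hq1.le h2
          _ = qq ε ^ (t + 1) := by rw [Real.rpow_natCast]
      have e4 : (hh ε ^ k * 2 ^ (n - k)) / qq ε ^ (t + 1) ≤ hh ε ^ n / qe ε ^ n := by
        apply div_le_div₀ (by positivity) e2 (by positivity) e3
      linarith
    calc ∑ k ∈ Finset.range (n+1),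
          2 * ((1 + qq ε ^ 2) ^ k * 2 ^ (n - k) / qq ε ^ (k + t + 1))
        ≤ ∑ _k ∈ Finset.range (n+1), 2 * (hh ε ^ n / qe ε ^ n) :=
          Finset.sum_le_sum hterm
      _ = (n + 1) * (2 * (hh ε ^ n / qe ε ^ n)) := by
          rw [Finset.sum_const, Finset.card_range, nsmul_eq_mul]; push_cast; ring
  -- step 2: hh^n / qe^n = (2 rho)^n
  have step2 : hh ε ^ n / qe ε ^ n = (2 * rho ε) ^ n := by
    rw [← div_pow]
    congr 1
    rw [rho]
    field_simp
  -- step 3: (n+1) ≤ (1/del) (1+del)^n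
  have hd0 : 0 < del ε := del_pos hε hε2
  have hd1 : del ε ≤ 1 := del_le_one hε hε2
  have step3 : ((n : ℝ) + 1) ≤ (1 / del ε) * (1 + del ε) ^ n := by
    have hb := one_add_mul_le_pow (a := del ε) (by linarith) n
    have hmul := mul_le_mul_of_nonneg_left hb
      (le_of_lt (show (0:ℝ) < 1 / del ε by positivity))
    have h2 : (1 / del ε) * (1 + (n:ℝ) * del ε) = 1 / del ε + n := by field_simp
    have h3 : 1 ≤ 1 / del ε := by
      rw [le_div_iff₀ hd0]; linarith
    rw [h2] at hmul
    linarith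
  have hrho0 : 0 < rho ε := rho_pos hε hε2
  calc ((BnF ε n).card : ℝ) ≤ (n + 1) * (2 * (2 * rho ε) ^ n) := by
        rw [← step2]; linarith [step1]
    _ ≤ ((1 / del ε) * (1 + del ε) ^ n) * (2 * (2 * rho ε) ^ n) := by
        have hp : (0:ℝ) ≤ 2 * (2 * rho ε) ^ n := by positivity
        exact mul_le_mul_of_nonneg_right step3 hp
    _ = (2 / del ε) * ((1 + del ε) * (2 * rho ε)) ^ n := by
        rw [mul_pow ((1:ℝ) + del ε) (2 * rho ε) n]; ring
    _ = (2 / del ε) * (2 * rho2 ε) ^ n := by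
        congr 2
        rw [← rho2_eq hε hε2]; ring

end Constants

/-! ### Good numbers are in the set -/

def Good (ε : ℝ) (m : ℕ) : Prop :=
  ∀ k ≤ Nat.log 2 m, 2 * aa m k ≤ k + tn ε (Nat.log 2 m)
    ∧ k ≤ 2 * aa m k + tn ε (Nat.log 2 m)

noncomputable def n0 (ε : ℝ) : ℕ := ⌈(4:ℝ) / ε⌉₊

lemma sqrt3_facts : 1 ≤ Real.sqrt 3 ∧ Real.sqrt 3 ≤ 2 := by
  have h := Real.sq_sqrt (by norm_num : (0:ℝ) ≤ 3)
  have h0 := Real.sqrt_nonneg 3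
  constructor <;> nlinarith

lemma good_mem {ε : ℝ} (hε : 0 < ε) (hε2 : ε ≤ 1/2) (m : ℕ) (hm : 2 ^ n0 ε ≤ m)
    (hg : Good ε m) :
    ∀ k : ℕ, (k : ℝ) ≤ Real.logb 2 m →
      (Real.sqrt 3 / 2) ^ k * (m : ℝ) ^ (1 - ε) ≤ (T^[k] m : ℝ) ∧
      (T^[k] m : ℝ) ≤ (Real.sqrt 3 / 2) ^ k * (m : ℝ) ^ (1 + ε) := by
  intro k hk
  obtain ⟨hs31, hs32⟩ := sqrt3_facts
  set s3 := Real.sqrt 3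
  set n := Nat.log 2 m with hn
  have hm0 : 0 < m := lt_of_lt_of_le (Nat.pow_pos (by norm_num)) hm
  have hmR : (0:ℝ) < m := by exact_mod_cast hm0
  have hm1R : (1:ℝ) ≤ m := by exact_mod_cast hm0
  have hnn0 : n0 ε ≤ n := by
    calc n0 ε = Nat.log 2 (2 ^ n0 ε) := (Nat.log_pow (by norm_num) _).symm
      _ ≤ n := Nat.log_mono_right hm
  have hne : (4:ℝ) ≤ ε * n := by
    have h1 : (4:ℝ) / ε ≤ (n0 ε : ℝ) := Nat.le_ceil _
    have h2 : ((n0 ε : ℕ) : ℝ) ≤ (n : ℝ) := by exact_mod_cast hnn0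
    have := (div_le_iff₀ hε).1 (h1.trans h2)
    linarith
  -- k ≤ n
  have hkn : k ≤ n := by
    have h1 : ((2:ℝ) ^ (k:ℝ)) ≤ m := by
      rwa [Real.le_logb_iff_rpow_le (by norm_num) hmR] at hk
    have h2 : ((2 ^ k : ℕ) : ℝ) ≤ (m : ℝ) := by
      rw [Nat.cast_pow]
      rwa [Real.rpow_natCast] at h1
    have h3 : 2 ^ k ≤ m := by exact_mod_cast h2
    exact Nat.le_log_of_pow_le (by norm_num) h3
  have h2nm : (2:ℕ) ^ n ≤ m := Nat.pow_log_le_self 2 (by omega)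
  have h2km : (2:ℕ) ^ k ≤ m := le_trans (Nat.pow_le_pow_right (by norm_num) hkn) h2nm
  set t := tn ε n with htdef
  have htR : (t : ℝ) + 1 ≤ ε * n := by
    have h1 : (t : ℝ) < ε / 2 * n + 1 := by
      rw [htdef, tn]
      exact Nat.ceil_lt_add_one (by positivity)
    linarith
  -- the key size bound : 2 * s3 ^ t ≤ m ^ ε
  have hA2 : 2 * s3 ^ t ≤ (m:ℝ) ^ (ε:ℝ) := by
    have b1 : s3 ^ t ≤ 2 ^ t := pow_le_pow_left₀ (Real.sqrt_nonneg 3) hs32 t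
    have b2 : (2:ℝ) * 2 ^ t = (2:ℝ) ^ ((t:ℝ) + 1) := by
      rw [show ((t:ℝ) + 1) = (((t+1 : ℕ)):ℝ) by push_cast; ring, Real.rpow_natCast]
      ring
    have b3 : (2:ℝ) ^ ((t:ℝ) + 1) ≤ (2:ℝ) ^ ((n:ℝ) * ε) := by
      apply Real.rpow_le_rpow_of_exponent_le (by norm_num)
      linarith [htR]
    have b4 : (2:ℝ) ^ ((n:ℝ) * ε) = (((2:ℕ) ^ n : ℕ) : ℝ) ^ (ε:ℝ) := by
      rw [Real.rpow_mul (by norm_num : (0:ℝ) ≤ 2), Real.rpow_natCast]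
      push_cast
      ring_nf
    have b5 : (((2:ℕ) ^ n : ℕ) : ℝ) ^ (ε:ℝ) ≤ (m:ℝ) ^ (ε:ℝ) :=
      Real.rpow_le_rpow (by positivity) (by exact_mod_cast h2nm) (le_of_lt hε)
    calc 2 * s3 ^ t ≤ 2 * 2 ^ t := by linarith [b1]
      _ = (2:ℝ) ^ ((t:ℝ) + 1) := b2
      _ ≤ (2:ℝ) ^ ((n:ℝ) * ε) := b3
      _ = (((2:ℕ) ^ n : ℕ) : ℝ) ^ (ε:ℝ) := b4
      _ ≤ (m:ℝ) ^ (ε:ℝ) := b5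
  have hs3t0 : (0:ℝ) ≤ s3 ^ t := by positivity
  have hA1 : s3 ^ t ≤ (m:ℝ) ^ (ε:ℝ) := by linarith
  obtain ⟨hg1, hg2⟩ := hg k hkn
  rw [← hn, ← htdef] at hg1 hg2
  have hs3sq : s3 ^ 2 = 3 := Real.sq_sqrt (by norm_num)
  have h3a : ((3:ℝ)) ^ aa m k = s3 ^ (2 * aa m k) := by
    rw [pow_mul, hs3sq]
  have hmepos : (0:ℝ) < (m:ℝ) ^ (ε:ℝ) := Real.rpow_pos_of_pos hmR _
  have hm1e : (m:ℝ) ^ ((1:ℝ) - ε) * (m:ℝ) ^ (ε:ℝ) = m := by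
    rw [← Real.rpow_add hmR]
    norm_num
  have hm1e' : (m:ℝ) ^ ((1:ℝ) + ε) = (m:ℝ) * (m:ℝ) ^ (ε:ℝ) := by
    rw [Real.rpow_add hmR]
    norm_num
  have hm1epos : (0:ℝ) ≤ (m:ℝ) ^ ((1:ℝ) - ε) := le_of_lt (Real.rpow_pos_of_pos hmR _)
  have h2k : (0:ℝ) < 2 ^ k := by positivity
  constructor
  · -- lower bound
    have c1 : ((3:ℕ) ^ aa m k * m : ℕ) ≤ ((2:ℕ) ^ k * T^[k] m : ℕ) := lower_nat m k
    have c1R : (3:ℝ) ^ aa m k * m ≤ 2 ^ k * (T^[k] m : ℝ) := by exact_mod_cast c1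
    have c2 : s3 ^ k ≤ s3 ^ (2 * aa m k) * s3 ^ t := by
      rw [← pow_add]
      exact pow_le_pow_right₀ hs31 (by omega)
    have c3 : s3 ^ t * (m:ℝ) ^ ((1:ℝ) - ε) ≤ (m:ℝ) := by
      calc s3 ^ t * (m:ℝ) ^ ((1:ℝ) - ε) ≤ (m:ℝ) ^ (ε:ℝ) * (m:ℝ) ^ ((1:ℝ) - ε) :=
            mul_le_mul_of_nonneg_right hA1 hm1epos
        _ = m := by rw [mul_comm]; exact hm1e
    have c4 : s3 ^ k * (m:ℝ) ^ ((1:ℝ) - ε) ≤ s3 ^ (2 * aa m k) * (m:ℝ) := by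
      calc s3 ^ k * (m:ℝ) ^ ((1:ℝ) - ε) ≤ (s3 ^ (2 * aa m k) * s3 ^ t) * (m:ℝ) ^ ((1:ℝ) - ε) :=
            mul_le_mul_of_nonneg_right c2 hm1epos
        _ = s3 ^ (2 * aa m k) * (s3 ^ t * (m:ℝ) ^ ((1:ℝ) - ε)) := by ring
        _ ≤ s3 ^ (2 * aa m k) * (m:ℝ) := by
            exact mul_le_mul_of_nonneg_left c3 (by positivity)
    rw [div_pow, div_mul_eq_mul_div, div_le_iff₀ h2k]
    calc s3 ^ k * (m:ℝ) ^ ((1:ℝ) - ε) ≤ s3 ^ (2 * aa m k) * (m:ℝ) := c4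
      _ = (3:ℝ) ^ aa m k * m := by rw [h3a]
      _ ≤ 2 ^ k * (T^[k] m : ℝ) := c1R
      _ = (T^[k] m : ℝ) * 2 ^ k := by ring
  · -- upper bound
    have c1 : 2 ^ k * T^[k] m ≤ 3 ^ aa m k * (m + 2 ^ k) :=
      le_trans (Nat.le_add_right _ _) (upper_nat m k)
    have c1R : 2 ^ k * (T^[k] m : ℝ) ≤ (3:ℝ) ^ aa m k * ((m:ℝ) + 2 ^ k) := by exact_mod_cast c1
    have c2R : (3:ℝ) ^ aa m k * ((m:ℝ) + 2 ^ k) ≤ (3:ℝ) ^ aa m k * (2 * m) := by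
      apply mul_le_mul_of_nonneg_left _ (by positivity)
      have : ((2:ℕ) ^ k : ℝ) ≤ (m : ℝ) := by exact_mod_cast h2km
      push_cast at this
      linarith
    have c3 : s3 ^ (2 * aa m k) ≤ s3 ^ k * s3 ^ t := by
      rw [← pow_add]
      exact pow_le_pow_right₀ hs31 (by omega)
    have c4 : s3 ^ (2 * aa m k) * (2 * (m:ℝ)) ≤ s3 ^ k * (m:ℝ) ^ ((1:ℝ) + ε) := by
      calc s3 ^ (2 * aa m k) * (2 * (m:ℝ)) ≤ (s3 ^ k * s3 ^ t) * (2 * (m:ℝ)) := by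
            apply mul_le_mul_of_nonneg_right c3 (by positivity)
        _ = s3 ^ k * ((2 * s3 ^ t) * (m:ℝ)) := by ring
        _ ≤ s3 ^ k * ((m:ℝ) ^ (ε:ℝ) * (m:ℝ)) := by
            apply mul_le_mul_of_nonneg_left _ (by positivity)
            exact mul_le_mul_of_nonneg_right hA2 (le_of_lt hmR)
        _ = s3 ^ k * (m:ℝ) ^ ((1:ℝ) + ε) := by rw [hm1e']; ring
    rw [div_pow, div_mul_eq_mul_div, le_div_iff₀ h2k]
    calc (T^[k] m : ℝ) * 2 ^ k = 2 ^ k * (T^[k] m : ℝ) := by ring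
      _ ≤ (3:ℝ) ^ aa m k * ((m:ℝ) + 2 ^ k) := c1R
      _ ≤ (3:ℝ) ^ aa m k * (2 * m) := c2R
      _ = s3 ^ (2 * aa m k) * (2 * (m:ℝ)) := by rw [h3a]
      _ ≤ s3 ^ k * (m:ℝ) ^ ((1:ℝ) + ε) := c4

/-! ### Injectivity of parity vectors on dyadic blocks -/

lemma vec_inj {n m m' : ℕ} (h1 : Nat.log 2 m = n) (h2 : Nat.log 2 m' = n)
    (hm : m ≠ 0) (hm' : m' ≠ 0) (hv : vec n m = vec n m') : m = m' := by
  have hpar : ∀ j < n, parity m j = parity m' j := by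
    intro j hj
    have := congrFun hv ⟨j, hj⟩
    simp only [vec, decide_eq_decide] at this
    have p1 := parity_le_one m j
    have p2 := parity_le_one m' j
    omega
  obtain ⟨ha, hr⟩ := congr_parity m m' n hpar
  have e1 := key_formula m n
  have e2 := key_formula m' n
  have edvd : (2:ℤ) ^ n ∣ (3:ℤ) ^ aa m n * ((m:ℤ) - (m':ℤ)) := by
    refine ⟨(T^[n] m : ℤ) - (T^[n] m' : ℤ), ?_⟩
    have e1' : (2:ℤ) ^ n * (T^[n] m : ℤ) = 3 ^ aa m n * m + rr m n := by exact_mod_cast e1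
    have e2' : (2:ℤ) ^ n * (T^[n] m' : ℤ) = 3 ^ aa m' n * m' + rr m' n := by exact_mod_cast e2
    rw [← ha, ← hr] at e2'
    linarith [e1', e2']
  have hcop : IsCoprime ((2:ℤ) ^ n) ((3:ℤ) ^ aa m n) := by
    apply IsCoprime.pow
    rw [Int.isCoprime_iff_gcd_eq_one]
    norm_num
  have hdvd2 : (2:ℤ) ^ n ∣ ((m:ℤ) - (m':ℤ)) := hcop.dvd_of_dvd_mul_left edvd
  have hb1 : 2 ^ n ≤ m := h1 ▸ Nat.pow_log_le_self 2 hm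
  have hb2 : m < 2 ^ (n + 1) := h1 ▸ Nat.lt_pow_succ_log_self (by norm_num) m
  have hb3 : 2 ^ n ≤ m' := h2 ▸ Nat.pow_log_le_self 2 hm'
  have hb4 : m' < 2 ^ (n + 1) := h2 ▸ Nat.lt_pow_succ_log_self (by norm_num) m'
  have hb2' : m < 2 ^ n * 2 := by rw [← pow_succ]; exact hb2
  have hb4' : m' < 2 ^ n * 2 := by rw [← pow_succ]; exact hb4
  have hcast : ((2 ^ n : ℕ) : ℤ) = (2:ℤ) ^ n := by push_cast; ring
  have habs : |(m:ℤ) - (m':ℤ)| < 2 ^ n := by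
    rw [abs_lt]
    omega
  have := Int.eq_zero_of_abs_lt_dvd hdvd2 habs
  omega

/-! ### Final assembly -/

lemma geom_aux (x : ℝ) (h1 : 3/2 ≤ x) (h2 : x ≤ 2) (L : ℕ) :
    ∑ n ∈ Finset.range (L+1), x ^ n ≤ 4 * x ^ L := by
  induction L with
  | zero => norm_num
  | succ L ih =>
    rw [Finset.sum_range_succ]
    have hx0 : (0:ℝ) ≤ x := by linarith
    have hp : (0:ℝ) ≤ x ^ L := pow_nonneg hx0 L
    have e : x ^ (L+1) = x ^ L * x := pow_succ x L
    nlinarith [ih]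

lemma rpow_logb_comm {x y : ℝ} (b : ℝ) (hx : 0 < x) (hy : 0 < y) :
    x ^ (Real.logb b y) = y ^ (Real.logb b x) := by
  rw [Real.rpow_def_of_pos hx, Real.rpow_def_of_pos hy, Real.logb, Real.logb]
  ring_nf

open scoped Classical in
theorem core_theorem (ε : ℝ) (hε : 0 < ε) (hε2 : ε ≤ 1/2) :
    starDense {m : ℕ |
      ∀ k : ℕ, (k : ℝ) ≤ Real.logb 2 m →
        (Real.sqrt 3 / 2) ^ k * (m : ℝ) ^ (1 - ε) ≤ (T^[k] m : ℝ) ∧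
        (T^[k] m : ℝ) ≤ (Real.sqrt 3 / 2) ^ k * (m : ℝ) ^ (1 + ε)} := by
  set S : Set ℕ := {m : ℕ |
      ∀ k : ℕ, (k : ℝ) ≤ Real.logb 2 m →
        (Real.sqrt 3 / 2) ^ k * (m : ℝ) ^ (1 - ε) ≤ (T^[k] m : ℝ) ∧
        (T^[k] m : ℝ) ≤ (Real.sqrt 3 / 2) ^ k * (m : ℝ) ^ (1 + ε)} with hS
  have hρ2a : 3/4 ≤ rho2 ε := rho2_ge hε hε2
  have hρ2b : rho2 ε < 1 := rho2_lt_one hε hε2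
  have hρ2pos : 0 < rho2 ε := by linarith
  have hd0 : 0 < del ε := del_pos hε hε2
  set D : ℝ := -Real.logb 2 (rho2 ε) with hD
  have hD0 : 0 < D := by
    have := Real.logb_neg (by norm_num : (1:ℝ) < 2) hρ2pos hρ2b
    rw [hD]; linarith
  have hD1 : D ≤ 1 := by
    have h1 : Real.logb 2 (1/2 : ℝ) ≤ Real.logb 2 (rho2 ε) := by
      apply Real.logb_le_logb_of_le (by norm_num : (1:ℝ) < 2) (by norm_num)
      linarith
    have h2 : Real.logb 2 (1/2 : ℝ) = -1 := by
      rw [one_div, Real.logb_inv, Real.logb_self_eq_one] <;> norm_num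
    rw [hD]; linarith
  set C : ℝ := (2:ℝ) ^ n0 ε + 8 / (del ε * rho2 ε) with hC
  have hC0 : 0 < C := by
    have : (0:ℝ) < (2:ℝ) ^ n0 ε := by positivity
    have : (0:ℝ) < 8 / (del ε * rho2 ε) := by positivity
    rw [hC]; positivity
  refine ⟨D, hD0, hD1, C, hC0, fun N hN => ?_⟩
  have hNR : (0:ℝ) < N := by exact_mod_cast hN
  have hNR1 : (1:ℝ) ≤ N := by exact_mod_cast hN
  set L := Nat.log 2 N with hL
  -- the bad set decomposition
  set BadN : Finset ℕ := (Finset.Icc 1 N).filter (fun m => m ∉ S) with hBadN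
  have cover : BadN ⊆ (Finset.Icc 1 N).filter (fun m => m < 2 ^ n0 ε)
      ∪ (Finset.range (L+1)).biUnion
        (fun n => (Finset.Icc 1 N).filter (fun m => Nat.log 2 m = n ∧ ¬ Good ε m)) := by
    intro m hm
    rw [hBadN, Finset.mem_filter] at hm
    obtain ⟨hmIcc, hmS⟩ := hm
    obtain ⟨hm1, hmN⟩ := Finset.mem_Icc.1 hmIcc
    by_cases hsmall : m < 2 ^ n0 ε
    · exact Finset.mem_union_left _ (Finset.mem_filter.2 ⟨hmIcc, hsmall⟩)
    · push_neg at hsmall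
      refine Finset.mem_union_right _ (Finset.mem_biUnion.2
        ⟨Nat.log 2 m, ?_, Finset.mem_filter.2 ⟨hmIcc, rfl, ?_⟩⟩)
      · rw [Finset.mem_range, hL]
        exact Nat.lt_succ_of_le (Nat.log_mono_right hmN)
      · intro hgood
        exact hmS (good_mem hε hε2 m hsmall hgood)
  have cardsmall : ((Finset.Icc 1 N).filter (fun m => m < 2 ^ n0 ε)).card ≤ 2 ^ n0 ε := by
    have hsub : (Finset.Icc 1 N).filter (fun m => m < 2 ^ n0 ε) ⊆ Finset.Ico 1 (2 ^ n0 ε) := by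
      intro m hm
      rw [Finset.mem_filter, Finset.mem_Icc] at hm
      rw [Finset.mem_Ico]
      exact ⟨hm.1.1, hm.2⟩
    have h2 := Finset.card_le_card hsub
    rw [Nat.card_Ico] at h2
    exact le_trans h2 (Nat.sub_le _ _)
  have cardblock : ∀ n, ((Finset.Icc 1 N).filter
      (fun m => Nat.log 2 m = n ∧ ¬ Good ε m)).card ≤ (BnF ε n).card := by
    intro n
    apply Finset.card_le_card_of_injOn (fun m => vec n m)
    · intro m hm
      rw [Finset.mem_coe, Finset.mem_filter] at hm
      obtain ⟨hmIcc, hlog, hbad⟩ := hm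
      rw [Finset.mem_coe, BnF, Finset.mem_filter]
      refine ⟨Finset.mem_univ _, ?_⟩
      rw [Good] at hbad
      push_neg at hbad
      obtain ⟨k, hk, hviol⟩ := hbad
      rw [hlog] at hk hviol
      refine ⟨k, hk, ?_⟩
      rw [sB_vec m n k hk]
      omega
    · intro m hm m' hm' hvv
      rw [Finset.coe_filter] at hm hm'
      obtain ⟨hmIcc, hlog, -⟩ := hm
      obtain ⟨hmIcc', hlog', -⟩ := hm'
      rw [Finset.mem_Icc] at hmIcc hmIcc'
      exact vec_inj hlog hlog' (by omega) (by omega) hvv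
  -- counting
  have hcardN : (BadN.card : ℝ) ≤ (2:ℝ) ^ n0 ε
      + ∑ n ∈ Finset.range (L+1), ((BnF ε n).card : ℝ) := by
    have h1 : BadN.card ≤ 2 ^ n0 ε + ∑ n ∈ Finset.range (L+1), (BnF ε n).card := by
      calc BadN.card ≤ ((Finset.Icc 1 N).filter (fun m => m < 2 ^ n0 ε)).card
            + ((Finset.range (L+1)).biUnion
              (fun n => (Finset.Icc 1 N).filter
                (fun m => Nat.log 2 m = n ∧ ¬ Good ε m))).card :=
          le_trans (Finset.card_le_card cover) (Finset.card_union_le _ _)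
        _ ≤ 2 ^ n0 ε + ∑ n ∈ Finset.range (L+1), (BnF ε n).card := by
          have h2 := Finset.card_biUnion_le (s := Finset.range (L+1))
            (t := fun n => (Finset.Icc 1 N).filter (fun m => Nat.log 2 m = n ∧ ¬ Good ε m))
          have h3 := Finset.sum_le_sum (fun n (_ : n ∈ Finset.range (L+1)) => cardblock n)
          omega
    calc (BadN.card : ℝ) ≤ ((2 ^ n0 ε + ∑ n ∈ Finset.range (L+1), (BnF ε n).card : ℕ) : ℝ) := by
          exact_mod_cast h1
      _ = (2:ℝ) ^ n0 ε + ∑ n ∈ Finset.range (L+1), ((BnF ε n).card : ℝ) := by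
          push_cast; ring
  -- bound the sum of BnF cards
  have hsum : ∑ n ∈ Finset.range (L+1), ((BnF ε n).card : ℝ)
      ≤ (8 / del ε) * (2 * rho2 ε) ^ L := by
    have h1 : ∑ n ∈ Finset.range (L+1), ((BnF ε n).card : ℝ)
        ≤ ∑ n ∈ Finset.range (L+1), (2 / del ε) * (2 * rho2 ε) ^ n :=
      Finset.sum_le_sum (fun n _ => BnF_bound hε hε2 n)
    have h2 : ∑ n ∈ Finset.range (L+1), (2 / del ε) * (2 * rho2 ε) ^ n
        = (2 / del ε) * ∑ n ∈ Finset.range (L+1), (2 * rho2 ε) ^ n := by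
      rw [Finset.mul_sum]
    have h3 := geom_aux (2 * rho2 ε) (by linarith) (by linarith) L
    have h4 : (0:ℝ) ≤ 2 / del ε := by positivity
    calc ∑ n ∈ Finset.range (L+1), ((BnF ε n).card : ℝ)
        ≤ (2 / del ε) * ∑ n ∈ Finset.range (L+1), (2 * rho2 ε) ^ n := by
          rw [← h2]; exact h1
      _ ≤ (2 / del ε) * (4 * (2 * rho2 ε) ^ L) := mul_le_mul_of_nonneg_left h3 h4
      _ = (8 / del ε) * (2 * rho2 ε) ^ L := by ring
  -- (2 rho2)^L ≤ N * (1/rho2) * N^(-D)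
  have hpowL : ((2 * rho2 ε) : ℝ) ^ L ≤ (N:ℝ) * ((1 / rho2 ε) * (N:ℝ) ^ (-D)) := by
    have e1 : ((2 * rho2 ε) : ℝ) ^ L = 2 ^ L * rho2 ε ^ L := mul_pow 2 (rho2 ε) L
    have h2L : ((2:ℝ)) ^ L ≤ N := by
      have := Nat.pow_log_le_self 2 (by omega : N ≠ 0)
      rw [← hL] at this
      exact_mod_cast this
    have hρL : (rho2 ε) ^ L ≤ (1 / rho2 ε) * (N:ℝ) ^ (-D) := by
      have hlogN : Real.logb 2 (N:ℝ) - 1 ≤ (L:ℝ) := by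
        have hNlt : (N:ℝ) < (2:ℝ) ^ ((L:ℝ) + 1) := by
          have := Nat.lt_pow_succ_log_self (by norm_num : 1 < 2) N
          rw [← hL] at this
          have hcast : ((2 ^ (L+1) : ℕ) : ℝ) = (2:ℝ) ^ ((L:ℝ)+1) := by
            push_cast
            rw [← Real.rpow_natCast 2 (L+1)]
            push_cast
            ring_nf
          calc (N:ℝ) < ((2 ^ (L+1) : ℕ) : ℝ) := by exact_mod_cast this
            _ = (2:ℝ) ^ ((L:ℝ)+1) := hcast
        have := (Real.logb_lt_iff_lt_rpow (by norm_num : (1:ℝ) < 2) hNR).2 hNlt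
        linarith
      have step1 : (rho2 ε) ^ L = (rho2 ε) ^ ((L:ℝ)) := (Real.rpow_natCast _ L).symm
      have step2 : (rho2 ε) ^ ((L:ℝ)) ≤ (rho2 ε) ^ (Real.logb 2 (N:ℝ) - 1) :=
        Real.rpow_le_rpow_of_exponent_ge hρ2pos (by linarith) hlogN
      have step3 : (rho2 ε) ^ (Real.logb 2 (N:ℝ) - 1)
          = (rho2 ε) ^ (Real.logb 2 (N:ℝ)) / rho2 ε := by
        rw [Real.rpow_sub hρ2pos, Real.rpow_one]
      have step4 : (rho2 ε) ^ (Real.logb 2 (N:ℝ)) = (N:ℝ) ^ (-D) := by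
        rw [rpow_logb_comm 2 hρ2pos hNR, hD, neg_neg]
      rw [step1]
      calc (rho2 ε) ^ ((L:ℝ)) ≤ (rho2 ε) ^ (Real.logb 2 (N:ℝ) - 1) := step2
        _ = (rho2 ε) ^ (Real.logb 2 (N:ℝ)) / rho2 ε := step3
        _ = (1 / rho2 ε) * (N:ℝ) ^ (-D) := by rw [step4]; ring
    calc ((2 * rho2 ε) : ℝ) ^ L = 2 ^ L * rho2 ε ^ L := e1
      _ ≤ (N:ℝ) * ((1 / rho2 ε) * (N:ℝ) ^ (-D)) := by
        apply mul_le_mul h2L hρL (by positivity) (by positivity)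
  -- total bad bound in terms of N^(1-D)
  have hN1D : (1:ℝ) ≤ (N:ℝ) ^ ((1:ℝ) - D) := Real.one_le_rpow hNR1 (by linarith)
  have hNN : (N:ℝ) * (N:ℝ) ^ (-D) = (N:ℝ) ^ ((1:ℝ) - D) := by
    rw [show (1:ℝ) - D = 1 + (-D) by ring, Real.rpow_add hNR, Real.rpow_one]
  have hbad : (BadN.card : ℝ) ≤ C * (N:ℝ) ^ ((1:ℝ) - D) := by
    have t1 : (2:ℝ) ^ n0 ε ≤ (2:ℝ) ^ n0 ε * (N:ℝ) ^ ((1:ℝ) - D) := by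
      nlinarith [hN1D, pow_pos (by norm_num : (0:ℝ) < 2) (n0 ε)]
    have t2 : (8 / del ε) * (2 * rho2 ε) ^ L
        ≤ (8 / (del ε * rho2 ε)) * (N:ℝ) ^ ((1:ℝ) - D) := by
      have h5 : (0:ℝ) ≤ 8 / del ε := by positivity
      calc (8 / del ε) * (2 * rho2 ε) ^ L
          ≤ (8 / del ε) * ((N:ℝ) * ((1 / rho2 ε) * (N:ℝ) ^ (-D))) :=
            mul_le_mul_of_nonneg_left hpowL h5
        _ = (8 / (del ε * rho2 ε)) * ((N:ℝ) * (N:ℝ) ^ (-D)) := by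
            field_simp
        _ = (8 / (del ε * rho2 ε)) * (N:ℝ) ^ ((1:ℝ) - D) := by rw [hNN]
    calc (BadN.card : ℝ) ≤ (2:ℝ) ^ n0 ε
          + ∑ n ∈ Finset.range (L+1), ((BnF ε n).card : ℝ) := hcardN
      _ ≤ (2:ℝ) ^ n0 ε + (8 / del ε) * (2 * rho2 ε) ^ L := by linarith [hsum]
      _ ≤ (2:ℝ) ^ n0 ε * (N:ℝ) ^ ((1:ℝ) - D)
          + (8 / (del ε * rho2 ε)) * (N:ℝ) ^ ((1:ℝ) - D) := by linarith [t1, t2]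
      _ = C * (N:ℝ) ^ ((1:ℝ) - D) := by rw [hC]; ring
  -- countIn ≥ N - BadN.card
  have hpartition : countIn S N + BadN.card = N := by
    rw [hBadN]
    have := Finset.card_filter_add_card_filter_not
      (s := Finset.Icc 1 N) (p := fun m => m ∈ S)
    rw [Nat.card_Icc] at this
    have hcic : countIn S N = ((Finset.Icc 1 N).filter (fun m => m ∈ S)).card := rfl
    omega
  have hcountR : (N:ℝ) - (BadN.card : ℝ) ≤ (countIn S N : ℝ) := by
    have : (countIn S N : ℝ) + (BadN.card : ℝ) = N := by exact_mod_cast hpartition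
    linarith
  -- final arithmetic
  rw [le_div_iff₀ hNR]
  have hND : (0:ℝ) < (N:ℝ) ^ D := Real.rpow_pos_of_pos hNR D
  have hkey : C / (N:ℝ) ^ D * N = C * (N:ℝ) ^ ((1:ℝ) - D) := by
    rw [Real.rpow_sub hNR, Real.rpow_one]
    field_simp
  have expand : (1 - C / (N:ℝ) ^ D) * N = N - C / (N:ℝ) ^ D * N := by ring
  rw [expand, hkey]
  linarith [hbad, hcountR]

open scoped Classical in
lemma countIn_mono {A B : Set ℕ} (h : ∀ m, 1 ≤ m → m ∈ A → m ∈ B) (N : ℕ) :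
    countIn A N ≤ countIn B N := by
  apply Finset.card_le_card
  intro m hm
  rw [Finset.mem_filter] at hm ⊢
  exact ⟨hm.1, h m (Finset.mem_Icc.1 hm.1).1 hm.2⟩

lemma starDense_mono {A B : Set ℕ} (h : ∀ m, 1 ≤ m → m ∈ A → m ∈ B) (hA : starDense A) :
    starDense B := by
  obtain ⟨D, hD0, hD1, C, hC0, hCD⟩ := hA
  refine ⟨D, hD0, hD1, C, hC0, fun N hN => ?_⟩
  refine le_trans (hCD N hN) ?_
  have hNR : (0:ℝ) < N := by exact_mod_cast hN
  gcongr
  exact_mod_cast countIn_mono h N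

theorem collatz_approx_initial_range (ε : ℝ) (hε : 0 < ε) :
    starDense {m : ℕ |
      ∀ k : ℕ, (k : ℝ) ≤ Real.logb 2 m →
        (Real.sqrt 3 / 2) ^ k * (m : ℝ) ^ (1 - ε) ≤ (T^[k] m : ℝ) ∧
        (T^[k] m : ℝ) ≤ (Real.sqrt 3 / 2) ^ k * (m : ℝ) ^ (1 + ε)} := by
  rcases le_or_gt ε (1/2) with h | h
  · exact core_theorem ε hε h
  · refine starDense_mono ?_ (core_theorem (1/2) (by norm_num) le_rfl)
    intro m hm1 hmem k hk
    obtain ⟨hlo, hhi⟩ := hmem k hk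
    have hmR : (1:ℝ) ≤ m := by exact_mod_cast hm1
    have hsk : (0:ℝ) ≤ (Real.sqrt 3 / 2) ^ k := by positivity
    constructor
    · refine le_trans ?_ hlo
      apply mul_le_mul_of_nonneg_left _ hsk
      exact Real.rpow_le_rpow_of_exponent_le hmR (by linarith)
    · refine le_trans hhi ?_
      apply mul_le_mul_of_nonneg_left _ hsk
      exact Real.rpow_le_rpow_of_exponent_le hmR (by linarith)
end
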